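/- arXiv:2412.01190 — 5 statements merged into one kernel-verified Lean document; each statement's English description precedes it below -/
import Mathlib

section
/- Let (X,d) be a metric space, K ∈ ℝ, E: X → ℝ ∪ {+∞} lower semi-continuous, and (y_t)_{t>0} a locally absolutely continuous curve with y_t → y₀ as t→0. If for all z with E(z) < ∞ and a.e. t > 0 one has (1/2)(d/dt)d²(y_t,z) + (K/2)d²(y_t,z) ≤ E(z) − E(y_t), then for all 0 ≤ s ≤ t and all such z: (e^{K(t−s)}/2)d²(y_t,z) − (1/2)d²(y_s,z) ≤ I_K(t−s)(E(z) − E(y_t)), where I_K(r) = ∫₀^r e^{Ku} du. -/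
open MeasureTheory Set
open scoped ENNReal


lemma exp_aux (K s : ℝ) (v u : ℝ) :
    ∫ r in v..u, K * Real.exp (K * (r - s)) =
      Real.exp (K * (u - s)) - Real.exp (K * (v - s)) := by
  have h : ∀ r : ℝ, HasDerivAt (fun x => Real.exp (K * (x - s)))
      (K * Real.exp (K * (r - s))) r := by
    intro r
    have h1 : HasDerivAt (fun x : ℝ => K * (x - s)) K r := by
      simpa using ((hasDerivAt_id r).sub_const s).const_mul K
    simpa [mul_comm] using h1.exp
  rw [intervalIntegral.integral_eq_sub_of_hasDerivAt (fun r _ => h r)]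
  exact (Continuous.intervalIntegrable (by continuity) _ _)

lemma ibp_aux (K s u : ℝ) (hsu : s ≤ u) (g : ℝ → ℝ)
    (hg : IntervalIntegrable g volume s u) :
    (∫ r in s..u, (K * Real.exp (K * (r - s)) * (∫ v in s..r, g v)
        + Real.exp (K * (r - s)) * g r))
      = Real.exp (K * (u - s)) * ∫ v in s..u, g v := by
  -- set integral versions
  have hgIoc : IntegrableOn g (Ioc s u) volume :=
    (intervalIntegrable_iff_integrableOn_Ioc_of_le hsu).1 hg
  set w : ℝ → ℝ := fun r => Real.exp (K * (r - s)) with hw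
  have hwcont : Continuous w := by continuity
  -- Fubini setup
  set F : ℝ → ℝ → ℝ := fun r v => if v ≤ r then K * w r * g v else 0 with hF
  have hFunc : Function.uncurry F =
      Set.indicator {p : ℝ × ℝ | p.2 ≤ p.1} (fun p => (K * w p.1) * g p.2) := by
    ext p
    by_cases h : p.2 ≤ p.1 <;>
      simp [hF, Function.uncurry, Set.indicator, h]
  have hKw_int : Integrable (fun r => K * w r) (volume.restrict (Ioc s u)) := by
    apply Continuous.integrableOn_Ioc (by continuity)
  have hFint : Integrable (Function.uncurry F)
      ((volume.restrict (Ioc s u)).prod (volume.restrict (Ioc s u))) := by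
    rw [hFunc]
    refine Integrable.indicator ?_ ?_
    · exact Integrable.mul_prod hKw_int hgIoc
    · exact measurableSet_le measurable_snd measurable_fst
  -- first: for r in Ioc s u, inner integral equals K*w r*(primitive)
  have inner1 : ∀ r ∈ Ioc s u,
      (∫ v in Ioc s u, F r v) = K * w r * ∫ v in s..r, g v := by
    intro r hr
    have : ∀ v : ℝ, F r v = Set.indicator (Iic r) (fun v => K * w r * g v) v := by
      intro v
      by_cases h : v ≤ r <;> simp [hF, Set.indicator, h]
    rw [show (fun v => F r v) = Set.indicator (Iic r) (fun v => K * w r * g v) from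
      funext this]
    rw [integral_indicator measurableSet_Iic, Measure.restrict_restrict measurableSet_Iic]
    have hset : Iic r ∩ Ioc s u = Ioc s r := by
      ext x
      simp only [mem_inter_iff, mem_Iic, mem_Ioc]
      constructor
      · rintro ⟨h1, h2, h3⟩; exact ⟨h2, h1⟩
      · rintro ⟨h1, h2⟩; exact ⟨h2, h1, h2.trans hr.2⟩
    rw [hset, integral_const_mul, intervalIntegral.integral_of_le hr.1.le]
  -- second: for v in Ioc s u, inner integral over r
  have inner2 : ∀ v ∈ Ioc s u,
      (∫ r in Ioc s u, F r v) = g v * (w u - w v) := by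
    intro v hv
    have : ∀ r : ℝ, F r v = Set.indicator (Ici v) (fun r => K * w r * g v) r := by
      intro r
      by_cases h : v ≤ r <;> simp [hF, Set.indicator, h]
    rw [show (fun r => F r v) = Set.indicator (Ici v) (fun r => K * w r * g v) from
      funext this]
    rw [integral_indicator measurableSet_Ici, Measure.restrict_restrict measurableSet_Ici]
    have hset : Ici v ∩ Ioc s u = Icc v u := by
      ext x
      simp only [mem_inter_iff, mem_Ici, mem_Ioc, mem_Icc]
      constructor
      · rintro ⟨h1, _, h3⟩; exact ⟨h1, h3⟩
      · rintro ⟨h1, h2⟩; exact ⟨h1, hv.1.trans_le h1, h2⟩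
    rw [hset, MeasureTheory.integral_Icc_eq_integral_Ioc,
      ← intervalIntegral.integral_of_le hv.2]
    rw [intervalIntegral.integral_mul_const, exp_aux K s v u]
    ring
  -- integrability of the two summands
  have hG_cont : ContinuousOn (fun r => ∫ v in s..r, g v) (uIcc s u) :=
    intervalIntegral.continuousOn_primitive_interval' hg left_mem_uIcc
  have hA_int : IntervalIntegrable
      (fun r => K * w r * (∫ v in s..r, g v)) volume s u :=
    (((continuous_const.mul hwcont).continuousOn.mul hG_cont)).intervalIntegrable
  have hB_int : IntervalIntegrable (fun r => w r * g r) volume s u :=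
    hg.continuousOn_mul hwcont.continuousOn
  rw [intervalIntegral.integral_add hA_int hB_int]
  have swap :
      (∫ r in Ioc s u, ∫ v in Ioc s u, F r v) = ∫ v in Ioc s u, ∫ r in Ioc s u, F r v := by
    exact MeasureTheory.integral_integral_swap hFint
  have term1 : (∫ r in s..u, K * w r * (∫ v in s..r, g v))
      = ∫ v in Ioc s u, g v * (w u - w v) := by
    rw [intervalIntegral.integral_of_le hsu]
    rw [show (∫ r in Ioc s u, K * w r * (∫ v in s..r, g v))
        = ∫ r in Ioc s u, ∫ v in Ioc s u, F r v from
      (setIntegral_congr_fun measurableSet_Ioc (fun r hr => (inner1 r hr).symm))]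
    rw [swap]
    exact setIntegral_congr_fun measurableSet_Ioc (fun v hv => inner2 v hv)
  have hwg_int : Integrable (fun v => w v * g v) (volume.restrict (Ioc s u)) :=
    (intervalIntegrable_iff_integrableOn_Ioc_of_le hsu).1 hB_int
  have hgwu_int : Integrable (fun v => g v * w u) (volume.restrict (Ioc s u)) :=
    hgIoc.mul_const _
  have term1' : (∫ v in Ioc s u, g v * (w u - w v))
      = w u * (∫ v in Ioc s u, g v) - ∫ v in Ioc s u, w v * g v := by
    have : (fun v => g v * (w u - w v)) = fun v => g v * w u - w v * g v := by
      ext v; ring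
    rw [this, integral_sub hgwu_int hwg_int, integral_mul_const]
    ring_nf
  rw [term1, term1', intervalIntegral.integral_of_le hsu,
    intervalIntegral.integral_of_le hsu]
  ring

lemma stepA_aux (K s u : ℝ) (hsu : s ≤ u) (g φ : ℝ → ℝ) (Ds : ℝ)
    (hg : IntervalIntegrable g volume s u) (hφ : IntervalIntegrable φ volume s u)
    (hb : ∀ᵐ r ∂volume.restrict (Ioc s u),
      g r + K * (Ds + ∫ v in s..r, g v) ≤ 2 * φ r) :
    Real.exp (K * (u - s)) * (Ds + ∫ v in s..u, g v) - Ds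
      ≤ 2 * ∫ r in s..u, Real.exp (K * (r - s)) * φ r := by
  set w : ℝ → ℝ := fun r => Real.exp (K * (r - s)) with hw
  have hwcont : Continuous w := by continuity
  have hG_cont : ContinuousOn (fun r => ∫ v in s..r, g v) (uIcc s u) :=
    intervalIntegral.continuousOn_primitive_interval' hg left_mem_uIcc
  have hA_int : IntervalIntegrable
      (fun r => K * w r * (Ds + ∫ v in s..r, g v)) volume s u :=
    ((continuous_const.mul hwcont).continuousOn.mul
      (continuousOn_const.add hG_cont)).intervalIntegrable
  have hB_int : IntervalIntegrable (fun r => w r * g r) volume s u :=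
    hg.continuousOn_mul hwcont.continuousOn
  have hwφ_int : IntervalIntegrable (fun r => w r * φ r) volume s u :=
    hφ.continuousOn_mul hwcont.continuousOn
  have identity : Real.exp (K * (u - s)) * (Ds + ∫ v in s..u, g v) - Ds
      = ∫ r in s..u, (K * w r * (Ds + ∫ v in s..r, g v) + w r * g r) := by
    rw [intervalIntegral.integral_add hA_int hB_int]
    have split : (∫ r in s..u, K * w r * (Ds + ∫ v in s..r, g v))
        = (∫ r in s..u, K * w r) * Ds
          + ((∫ r in s..u, (K * w r * (∫ v in s..r, g v) + w r * g r))
              - ∫ r in s..u, w r * g r) := by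
      have e1 : (fun r => K * w r * (Ds + ∫ v in s..r, g v))
          = fun r => K * w r * Ds + K * w r * (∫ v in s..r, g v) := by
        ext r; ring
      have hKwDs : IntervalIntegrable (fun r => K * w r * Ds) volume s u :=
        (Continuous.intervalIntegrable (by continuity) _ _)
      have hA'_int : IntervalIntegrable
          (fun r => K * w r * (∫ v in s..r, g v)) volume s u :=
        ((continuous_const.mul hwcont).continuousOn.mul hG_cont).intervalIntegrable
      rw [e1, intervalIntegral.integral_add hKwDs hA'_int,
        intervalIntegral.integral_add hA'_int hB_int,
        intervalIntegral.integral_mul_const]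
      ring
    rw [split, ibp_aux K s u hsu g hg, exp_aux K s s u]
    simp only [hw]
    rw [sub_self s, mul_zero, Real.exp_zero]
    ring
  rw [identity]
  have hmono : (∫ r in s..u, (K * w r * (Ds + ∫ v in s..r, g v) + w r * g r))
      ≤ ∫ r in s..u, 2 * (w r * φ r) := by
    apply intervalIntegral.integral_mono_ae_restrict hsu (hA_int.add hB_int)
      (hwφ_int.const_mul 2)
    have hres : volume.restrict (Icc s u) = volume.restrict (Ioc s u) :=
      (Measure.restrict_congr_set (MeasureTheory.Ioc_ae_eq_Icc)).symm
    rw [hres]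
    filter_upwards [hb] with r hr
    have hwpos : 0 < w r := Real.exp_pos _
    have := mul_le_mul_of_nonneg_left hr hwpos.le
    nlinarith [this]
  calc _ ≤ ∫ r in s..u, 2 * (w r * φ r) := hmono
    _ = 2 * ∫ r in s..u, w r * φ r := intervalIntegral.integral_const_mul _ _

lemma lsc_lb_aux {X : Type*} [MetricSpace X]
    (E : X → EReal) (hE : LowerSemicontinuous E)
    (y : ℝ → X) (hcont : ContinuousOn y (Set.Ici 0))
    (hbot : ∀ x : X, E x ≠ ⊥) (a b : ℝ) (ha : 0 ≤ a) :
    ∃ L : ℝ, ∀ v ∈ Set.Icc a b, (L : EReal) ≤ E (y v) := by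
  by_contra hcon
  push_neg at hcon
  have hseq : ∀ n : ℕ, ∃ v ∈ Set.Icc a b, E (y v) < ((-(n:ℝ) : ℝ) : EReal) := by
    intro n
    obtain ⟨v, hv, hv2⟩ := hcon (-(n:ℝ))
    exact ⟨v, hv, hv2⟩
  choose v hv hv2 using hseq
  obtain ⟨x, hx, φ, hφmono, hφtend⟩ := isCompact_Icc.tendsto_subseq hv
  -- pick real c < E (y x)
  have hbx : (⊥ : EReal) < E (y x) := Ne.bot_lt' (Ne.symm (hbot (y x)))
  obtain ⟨c, hc1, hc2⟩ := exists_between hbx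
  have hcne : c ≠ ⊥ := ne_of_gt hc1
  have hcne' : c ≠ ⊤ := ne_top_of_lt hc2
  set cr : ℝ := c.toReal with hcr
  have hcc : (cr : EReal) = c := EReal.coe_toReal hcne' hcne
  -- lower semicontinuity of E at y x
  have hev : ∀ᶠ w in nhds (y x), c < E w := hE (y x) c hc2
  have hyx : Filter.Tendsto y (nhdsWithin x (Set.Ici 0)) (nhds (y x)) :=
    hcont x (le_trans ha hx.1)
  have htend' : Filter.Tendsto (fun n => v (φ n)) Filter.atTop
      (nhdsWithin x (Set.Ici 0)) := by
    apply tendsto_nhdsWithin_of_tendsto_nhds_of_eventually_within _ hφtend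
    exact Filter.Eventually.of_forall (fun n => le_trans ha (hv (φ n)).1)
  have hev2 : ∀ᶠ n in Filter.atTop, c < E (y (v (φ n))) :=
    (hyx.comp htend').eventually hev
  have hev3 : ∀ᶠ n in Filter.atTop, E (y (v (φ n))) < c := by
    have hφge : ∀ n : ℕ, (n : ℝ) ≤ (φ n : ℝ) := fun n => by
      exact_mod_cast hφmono.le_apply
    filter_upwards [Filter.eventually_ge_atTop (Nat.ceil (-cr + 1))] with n hn
    refine lt_of_lt_of_le (hv2 (φ n)) ?_
    rw [← hcc, EReal.coe_le_coe_iff]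
    have : (Nat.ceil (-cr + 1) : ℝ) ≤ (n : ℝ) := by exact_mod_cast hn
    have h2 := Nat.le_ceil (-cr + 1)
    have h3 := hφge n
    have hrw : ((-(↑(φ n) : ℝ)) : ℝ) ≤ cr ↔ True := by
      constructor
      · intro; trivial
      · intro; linarith
    simp only [hrw]
  obtain ⟨n, h1, h2⟩ := (hev2.and hev3).exists
  exact absurd (h1.trans h2) (lt_irrefl _)


section
variable {X : Type*} [MetricSpace X]
  (K : ℝ) (E : X → EReal)
  (y : ℝ → X)

lemma coe_le_bot_false (x : ℝ) (h : (x : EReal) ≤ ⊥) : False := by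
  simp only [le_bot_iff] at h
  exact EReal.coe_ne_bot x h

lemma ae_pos_false (h : ∀ᵐ r ∂(volume : Measure ℝ), 0 < r → False) : False := by
  have h2 : ∀ᵐ r ∂(volume : Measure ℝ), r ∉ Set.Ioi (0:ℝ) := by
    filter_upwards [h] with r hr hr0
    exact hr hr0
  have h3 : (volume : Measure ℝ) (Set.Ioi (0:ℝ)) = 0 := by
    have h4 := MeasureTheory.ae_iff.1 h2
    simp only [not_not] at h4
    convert h4 using 2; rfl
  rw [Real.volume_Ioi] at h3
  exact (by simp : (⊤ : ℝ≥0∞) ≠ 0) h3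

def ACHyp : Prop := ∀ z : X, E z ≠ ⊤ → ∃ g : ℝ → ℝ,
      (∀ s t : ℝ, 0 < s → s ≤ t → IntervalIntegrable g MeasureTheory.volume s t ∧
        dist (y t) z ^ 2 - dist (y s) z ^ 2 = ∫ r in s..t, g r) ∧
      (∀ᵐ r ∂MeasureTheory.volume, 0 < r →
        ((1 / 2 * g r + K / 2 * dist (y r) z ^ 2 : ℝ) : EReal) ≤ E z - E (y r))

variable {K E y}

lemma noBot_aux (hAC : ACHyp K E y) : ∀ x : X, E x ≠ ⊥ := by
  intro x hx
  have hx' : E x ≠ ⊤ := by rw [hx]; exact bot_ne_top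
  obtain ⟨g, _, hae⟩ := hAC x hx'
  apply ae_pos_false
  filter_upwards [hae] with r hr hr0
  have := hr hr0
  rw [hx, EReal.bot_sub] at this
  exact coe_le_bot_false _ this

lemma aeNeTop_aux (hAC : ACHyp K E y) {z : X} (hz : E z ≠ ⊤) :
    ∀ᵐ r ∂(volume : Measure ℝ), 0 < r → E (y r) ≠ ⊤ := by
  have hbot := noBot_aux hAC
  obtain ⟨c, hc⟩ : ∃ c : ℝ, E z = (c : EReal) :=
    ⟨(E z).toReal, (EReal.coe_toReal hz (hbot z)).symm⟩
  obtain ⟨g, _, hae⟩ := hAC z hz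
  filter_upwards [hae] with r hr hr0 htop
  have := hr hr0
  rw [hc, htop, EReal.sub_top] at this
  exact coe_le_bot_false _ this

lemma aeReal_aux (hAC : ACHyp K E y) {z : X} (hz : E z ≠ ⊤) :
    ∀ᵐ r ∂(volume : Measure ℝ), 0 < r →
      E (y r) = (((E (y r)).toReal : ℝ) : EReal) := by
  filter_upwards [aeNeTop_aux hAC hz] with r hr hr0
  exact (EReal.coe_toReal (hr hr0) (noBot_aux hAC (y r))).symm
end

section
variable {X : Type*} [MetricSpace X] {K : ℝ} {E : X → EReal} {y : ℝ → X}

lemma mono_aux (hE : LowerSemicontinuous E) (hcont : ContinuousOn y (Set.Ici 0))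
    (hAC : ACHyp K E y) :
    ∀ a b : ℝ, 0 < a → a ≤ b → E (y b) ≤ E (y a) := by
  intro a b ha hab'
  letI : MeasurableSpace X := borel X
  haveI : BorelSpace X := ⟨rfl⟩
  rcases eq_or_lt_of_le hab' with rfl | hab
  · exact le_refl _
  by_cases hEa : E (y a) = ⊤
  · rw [hEa]; exact le_top
  have hbot := noBot_aux hAC
  set ea : ℝ := (E (y a)).toReal with hea
  have hEa' : E (y a) = (ea : EReal) := (EReal.coe_toReal hEa (hbot (y a))).symm
  set f : ℝ → ℝ := fun r => (E (y r)).toReal with hf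
  have hfaereal : ∀ᵐ r ∂(volume : Measure ℝ), 0 < r → E (y r) = ((f r : ℝ) : EReal) :=
    aeReal_aux hAC hEa
  -- measurability of f
  have hymeas : AEMeasurable y (volume.restrict (Set.Ici 0)) :=
    hcont.aemeasurable measurableSet_Ici
  have hfmeas : AEMeasurable f (volume.restrict (Set.Ici 0)) :=
    (hE.measurable.comp_aemeasurable hymeas).ereal_toReal
  have hfmeas' : ∀ a' b' : ℝ, 0 ≤ a' →
      AEStronglyMeasurable f (volume.restrict (Set.Ioc a' b')) := by
    intro a' b' ha'
    refine (hfmeas.mono_measure ?_).aestronglyMeasurable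
    exact Measure.restrict_mono (fun x hx => le_of_lt (lt_of_le_of_lt ha' hx.1)) le_rfl
  -- lower bound on Icc a b
  obtain ⟨L, hL⟩ := lsc_lb_aux E hE y hcont hbot a b ha.le
  -- data from z = y a
  obtain ⟨ga, hga, haea⟩ := hAC (y a) hEa
  -- integrability of f on Ioc a b
  have hDacont : ContinuousOn (fun r => dist (y r) (y a) ^ 2) (Set.Icc a b) := by
    apply ContinuousOn.pow
    exact ((continuous_id.dist continuous_const)).comp_continuousOn
      (hcont.mono (fun x hx => le_trans ha.le hx.1))
  have hgaint : IntegrableOn ga (Set.Ioc a b) volume :=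
    (intervalIntegrable_iff_integrableOn_Ioc_of_le hab').1 (hga a b ha hab').1
  have hmajint : IntegrableOn
      (fun r => |ea| + |L| + (1/2) * |ga r| + (|K|/2) * dist (y r) (y a) ^ 2)
      (Set.Ioc a b) volume := by
    have i1 : IntegrableOn (fun _ : ℝ => |ea| + |L|) (Set.Ioc a b) volume :=
      integrableOn_const measure_Ioc_lt_top.ne
    have i2 : IntegrableOn (fun r => (1/2) * |ga r|) (Set.Ioc a b) volume :=
      (hgaint.abs).const_mul _
    have i3 : IntegrableOn (fun r => (|K|/2) * dist (y r) (y a) ^ 2)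
        (Set.Ioc a b) volume :=
      ((hDacont.integrableOn_Icc).mono_set Set.Ioc_subset_Icc_self).const_mul _
    have h4 := (i1.add i2).add i3
    apply h4.congr
    apply Filter.Eventually.of_forall
    intro x
    simp only [Pi.add_apply]
  have hfint : IntegrableOn f (Set.Ioc a b) volume := by
    apply Integrable.mono' hmajint (hfmeas' a b ha.le)
    have h1 : ∀ᵐ r ∂volume.restrict (Set.Ioc a b), 0 < r →
        ((1 / 2 * ga r + K / 2 * dist (y r) (y a) ^ 2 : ℝ) : EReal)
          ≤ E (y a) - E (y r) := ae_restrict_of_ae haea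
    have h2 : ∀ᵐ r ∂volume.restrict (Set.Ioc a b), 0 < r →
        E (y r) = ((f r : ℝ) : EReal) := ae_restrict_of_ae hfaereal
    filter_upwards [h1, h2, ae_restrict_mem measurableSet_Ioc] with r hr1 hr2 hr3
    have hr0 : 0 < r := ha.trans hr3.1
    have hreal := hr2 hr0
    have hub := hr1 hr0
    rw [hEa', hreal, ← EReal.coe_sub, EReal.coe_le_coe_iff] at hub
    have hlb : L ≤ f r := by
      have := hL r (Set.mem_Icc.2 ⟨hr3.1.le, hr3.2⟩)
      rw [hreal] at this
      exact EReal.coe_le_coe_iff.1 this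
    have hD : (0:ℝ) ≤ dist (y r) (y a) ^ 2 := by positivity
    rw [Real.norm_eq_abs, abs_le]
    constructor
    · have : -|L| ≤ L := neg_abs_le L
      nlinarith [abs_nonneg ea, abs_nonneg (ga r), abs_nonneg K,
        sq_nonneg (dist (y r) (y a))]
    · have h5 : f r ≤ ea - 1/2 * ga r - K/2 * dist (y r) (y a) ^ 2 := by linarith
      have h6 : ga r ≥ -|ga r| := neg_abs_le _
      have h7 : -(K/2) * dist (y r) (y a) ^ 2 ≤ (|K|/2) * dist (y r) (y a) ^ 2 := by
        apply mul_le_mul_of_nonneg_right _ hD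
        have := neg_abs_le K
        linarith [le_abs_self K]
      nlinarith [le_abs_self ea, abs_nonneg L]
  -- the set S and its supremum
  set S : Set ℝ := {v | v ∈ Set.Ico a b ∧ E (y v) ≤ (ea : EReal)} with hS
  have hSa : a ∈ S := ⟨Set.mem_Ico.2 ⟨le_rfl, hab⟩, le_of_eq hEa'⟩
  have hSbdd : BddAbove S := ⟨b, fun v hv => hv.1.2.le⟩
  set τ : ℝ := sSup S with hτ
  have haτ : a ≤ τ := le_csSup hSbdd hSa
  have hτb : τ ≤ b := csSup_le ⟨a, hSa⟩ (fun v hv => hv.1.2.le)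
  -- key inequality for each r ∈ S
  have key : ∀ r ∈ S, (∫ v in r..b, Real.exp (K * v) * (f v - ea)) ≤ 0 := by
    intro r hrS
    obtain ⟨hrIco, hrE⟩ := hrS
    have har : a ≤ r := hrIco.1
    have hrb : r < b := hrIco.2
    have hr0 : 0 < r := lt_of_lt_of_le ha har
    have hErtop : E (y r) ≠ ⊤ := ne_top_of_le_ne_top (EReal.coe_ne_top ea) hrE
    set er : ℝ := (E (y r)).toReal with her
    have hEr' : E (y r) = (er : EReal) := (EReal.coe_toReal hErtop (hbot (y r))).symm
    have herle : er ≤ ea := by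
      rw [hEr', EReal.coe_le_coe_iff] at hrE; exact hrE
    obtain ⟨gr, hgr, haer⟩ := hAC (y r) hErtop
    set Ds : ℝ := dist (y r) (y r) ^ 2 with hDs
    have hDs0 : Ds = 0 := by simp [hDs]
    have hgint : IntervalIntegrable gr volume r b := (hgr r b hr0 hrb.le).1
    have hfint' : IntervalIntegrable f volume r b := by
      rw [intervalIntegrable_iff_integrableOn_Ioc_of_le hrb.le]
      exact hfint.mono_set (Set.Ioc_subset_Ioc har le_rfl)
    have hφint : IntervalIntegrable (fun v => er - f v) volume r b :=
      (intervalIntegrable_const).sub hfint'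
    have hb : ∀ᵐ v ∂volume.restrict (Set.Ioc r b),
        gr v + K * (Ds + ∫ x in r..v, gr x) ≤ 2 * (er - f v) := by
      filter_upwards [ae_restrict_of_ae haer, ae_restrict_of_ae hfaereal,
        ae_restrict_mem measurableSet_Ioc] with v hv1 hv2 hv3
      have hv0 : 0 < v := lt_trans hr0 hv3.1
      have hreal := hv2 hv0
      have hub := hv1 hv0
      rw [hEr', hreal, ← EReal.coe_sub, EReal.coe_le_coe_iff] at hub
      have hDr : Ds + ∫ x in r..v, gr x = dist (y v) (y r) ^ 2 := by
        have := (hgr r v hr0 hv3.1.le).2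
        rw [hDs0]; linarith
      rw [hDr]; linarith
    have hstep := stepA_aux K r b hrb.le gr (fun v => er - f v) Ds hgint hφint hb
    have hDb : Ds + ∫ v in r..b, gr v = dist (y b) (y r) ^ 2 := by
      have := (hgr r b hr0 hrb.le).2
      rw [hDs0]; linarith
    have hQ : 0 ≤ ∫ v in r..b, Real.exp (K * (v - r)) * (er - f v) := by
      rw [hDb] at hstep
      rw [hDs0] at hstep
      have e1 : (0:ℝ) ≤ Real.exp (K * (b - r)) * dist (y b) (y r) ^ 2 :=
        mul_nonneg (Real.exp_pos _).le (sq_nonneg _)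
      linarith
    have hA_int : IntervalIntegrable (fun v => Real.exp (K * v) * (er - f v))
        volume r b :=
      hφint.continuousOn_mul
        (Real.continuous_exp.comp (continuous_const.mul continuous_id)).continuousOn
    have hQ2 : 0 ≤ ∫ v in r..b, Real.exp (K * v) * (er - f v) := by
      have congr1 : Set.EqOn (fun v => Real.exp (K * (v - r)) * (er - f v))
          (fun v => Real.exp (-(K * r)) * (Real.exp (K * v) * (er - f v)))
          (Set.uIcc r b) := by
        intro v _
        simp only
        rw [← mul_assoc, ← Real.exp_add]
        ring_nf
      rw [intervalIntegral.integral_congr congr1,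
        intervalIntegral.integral_const_mul] at hQ
      nlinarith [Real.exp_pos (-(K * r))]
    have hExp_int : IntervalIntegrable (fun v => Real.exp (K * v)) volume r b :=
      (Real.continuous_exp.comp (continuous_const.mul continuous_id)).intervalIntegrable _ _
    have hFint'' : IntervalIntegrable (fun v => Real.exp (K * v) * (f v - ea))
        volume r b :=
      (hfint'.sub intervalIntegrable_const).continuousOn_mul
        (Real.continuous_exp.comp (continuous_const.mul continuous_id)).continuousOn
    have h9 : (∫ v in r..b,
          (Real.exp (K * v) * (er - f v) + Real.exp (K * v) * (f v - ea)))
        = (er - ea) * ∫ v in r..b, Real.exp (K * v) := by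
      rw [← intervalIntegral.integral_const_mul]
      apply intervalIntegral.integral_congr
      intro v _
      simp only
      ring
    have h10 : (∫ v in r..b,
          (Real.exp (K * v) * (er - f v) + Real.exp (K * v) * (f v - ea)))
        = (∫ v in r..b, Real.exp (K * v) * (er - f v))
          + ∫ v in r..b, Real.exp (K * v) * (f v - ea) :=
      intervalIntegral.integral_add hA_int hFint''
    have hIexp : 0 ≤ ∫ v in r..b, Real.exp (K * v) :=
      intervalIntegral.integral_nonneg hrb.le (fun v _ => (Real.exp_pos _).le)
    nlinarith [mul_nonneg (sub_nonneg.2 herle) hIexp]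
  -- approximation of the supremum from inside S
  have hclose : ∀ δ : ℝ, 0 < δ → ∃ r ∈ S, τ - δ < r := by
    intro δ hδ
    obtain ⟨r, hrS, hr⟩ := exists_lt_of_lt_csSup ⟨a, hSa⟩ (by linarith : τ - δ < τ)
    exact ⟨r, hrS, hr⟩
  have hleτ : ∀ r ∈ S, r ≤ τ := fun r hr => le_csSup hSbdd hr
  -- interval integrability of F on a..b
  set F : ℝ → ℝ := fun v => Real.exp (K * v) * (f v - ea) with hF
  have hfint2 : IntervalIntegrable f volume a b := by
    rw [intervalIntegrable_iff_integrableOn_Ioc_of_le hab']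
    exact hfint
  have hFint : IntervalIntegrable F volume a b :=
    (hfint2.sub intervalIntegrable_const).continuousOn_mul
      (Real.continuous_exp.comp (continuous_const.mul continuous_id)).continuousOn
  -- τ = b
  have hτeq : τ = b := by
    by_contra hne
    have hτlt : τ < b := lt_of_le_of_ne hτb hne
    -- positivity of the tail integral
    set ε : ℝ := ∫ v in τ..b, F v with hε
    have hFτb : IntervalIntegrable F volume τ b := by
      apply hFint.mono_set
      rw [Set.uIcc_of_le hab', Set.uIcc_of_le hτb]
      exact Set.Icc_subset_Icc haτ le_rfl
    have hεpos : 0 < ε := by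
      have hpos_ae : ∀ᵐ v ∂volume.restrict (Set.Ioc τ b), 0 < F v := by
        have hane : ∀ᵐ v ∂(volume : Measure ℝ), v ≠ b := by
          rw [MeasureTheory.ae_iff]
          have : {v : ℝ | ¬v ≠ b} = {b} := by ext v; simp
          rw [this]
          exact measure_singleton b
        filter_upwards [ae_restrict_of_ae hane,
          ae_restrict_of_ae hfaereal, ae_restrict_mem measurableSet_Ioc]
          with v hv1 hv2 hv3
        have hv0 : 0 < v := lt_of_le_of_lt ha.le (lt_of_le_of_lt haτ hv3.1)
        have hvb : v < b := lt_of_le_of_ne hv3.2 hv1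
        have hvS : v ∉ S := fun hvS => absurd (hleτ v hvS) (not_le.2 hv3.1)
        have hva : a ≤ v := le_trans haτ hv3.1.le
        have : ¬ E (y v) ≤ (ea : EReal) := fun hle =>
          hvS ⟨Set.mem_Ico.2 ⟨hva, hvb⟩, hle⟩
        push_neg at this
        rw [hv2 hv0, EReal.coe_lt_coe_iff] at this
        have := sub_pos.2 this
        exact mul_pos (Real.exp_pos _) this
      have hFτb' : IntegrableOn F (Set.Ioc τ b) volume :=
        (intervalIntegrable_iff_integrableOn_Ioc_of_le hτlt.le).1 hFτb
      have hnonneg : 0 ≤ ε := by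
        rw [hε, intervalIntegral.integral_of_le hτlt.le]
        apply setIntegral_nonneg_ae measurableSet_Ioc
        have h11 := hpos_ae
        rw [ae_restrict_iff' measurableSet_Ioc] at h11
        filter_upwards [h11] with v hv hv2
        exact (hv hv2).le
      rcases eq_or_lt_of_le hnonneg with heq | hlt
      · exfalso
        rw [hε, intervalIntegral.integral_of_le hτlt.le] at heq
        have hzero := (integral_eq_zero_iff_of_nonneg_ae
          (by filter_upwards [hpos_ae] with v hv; exact hv.le) hFτb').1 heq.symm
        have hfalse : ∀ᵐ v ∂volume.restrict (Set.Ioc τ b), False := by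
          filter_upwards [hpos_ae, hzero] with v hv1 hv2
          rw [Pi.zero_apply] at hv2
          exact absurd hv2.symm (ne_of_lt hv1)
        have hmeas0 : volume.restrict (Set.Ioc τ b) (Set.univ) = 0 := by
          have := MeasureTheory.ae_iff.1 hfalse
          simpa using this
        rw [Measure.restrict_apply_univ] at hmeas0
        rw [Real.volume_Ioc] at hmeas0
        simp only [ENNReal.ofReal_eq_zero] at hmeas0
        linarith
      · exact hlt
    -- continuity of the primitive of |F|
    set P : ℝ → ℝ := fun x => ∫ v in a..x, |F v| with hP
    have hPcont : ContinuousOn P (Set.uIcc a b) :=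
      intervalIntegral.continuousOn_primitive_interval' hFint.abs Set.left_mem_uIcc
    have hτmem : τ ∈ Set.uIcc a b := by
      rw [Set.uIcc_of_le hab']; exact ⟨haτ, hτb⟩
    have hPw := hPcont τ hτmem
    rw [Metric.continuousWithinAt_iff] at hPw
    obtain ⟨δ, hδpos, hδ⟩ := hPw ε hεpos
    obtain ⟨r, hrS, hrτ⟩ := hclose δ hδpos
    have hrleτ : r ≤ τ := hleτ r hrS
    have hrmem : r ∈ Set.uIcc a b := by
      rw [Set.uIcc_of_le hab']; exact ⟨hrS.1.1, hrleτ.trans hτb⟩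
    have hdist : dist r τ < δ := by
      rw [Real.dist_eq, abs_lt]; constructor <;> linarith
    have hPr := hδ hrmem hdist
    have hFrτ : IntervalIntegrable F volume r τ := by
      apply hFint.mono_set
      rw [Set.uIcc_of_le hab', Set.uIcc_of_le hrleτ]
      exact Set.Icc_subset_Icc hrS.1.1 hτb
    have hFar : IntervalIntegrable (fun v => |F v|) volume a r := by
      apply hFint.abs.mono_set
      rw [Set.uIcc_of_le hab', Set.uIcc_of_le hrS.1.1]
      exact Set.Icc_subset_Icc le_rfl (hrleτ.trans hτb)
    have hPdiff : P τ - P r = ∫ v in r..τ, |F v| := by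
      rw [hP]
      simp only
      rw [← intervalIntegral.integral_add_adjacent_intervals hFar hFrτ.abs]
      ring
    have habs1 : |∫ v in r..τ, F v| ≤ ∫ v in r..τ, |F v| :=
      intervalIntegral.abs_integral_le_integral_abs hrleτ
    have hsplit2 : (∫ v in r..b, F v) = (∫ v in r..τ, F v) + ∫ v in τ..b, F v :=
      (intervalIntegral.integral_add_adjacent_intervals hFrτ hFτb).symm
    have hkey := key r hrS
    rw [hsplit2, ← hε] at hkey
    have hPd : P τ - P r < ε := by
      have h12 := hPr
      rw [Real.dist_eq] at h12
      have := le_abs_self (P r - P τ)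
      have := neg_abs_le (P r - P τ)
      linarith
    have hQ1 : -(∫ v in r..τ, F v) ≤ P τ - P r := by
      rw [hPdiff]
      have := neg_abs_le (∫ v in r..τ, F v)
      linarith
    linarith
  -- conclusion via lower semicontinuity at b
  rw [hEa']
  by_contra hgt
  push_neg at hgt
  have hev : ∀ᶠ w in nhds (y b), (ea : EReal) < E w := hE (y b) _ hgt
  have hyb : ContinuousWithinAt y (Set.Ici 0) b :=
    hcont b (le_trans ha.le hab')
  have hev2 : ∀ᶠ v in nhdsWithin b (Set.Ici 0), (ea : EReal) < E (y v) :=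
    hyb.eventually hev
  rw [eventually_nhdsWithin_iff, Metric.eventually_nhds_iff] at hev2
  obtain ⟨δ, hδpos, hδ⟩ := hev2
  obtain ⟨r, hrS, hrτ⟩ := hclose δ hδpos
  rw [hτeq] at hrτ
  have hrb : r < b := hrS.1.2
  have hdist : dist r b < δ := by
    rw [Real.dist_eq, abs_lt]; constructor <;> linarith
  have hlt := hδ hdist (le_trans ha.le hrS.1.1)
  exact absurd hrS.2 (not_le.2 hlt)
end

/-- Integral formulation of the `EVI_K` gradient-flow inequality: the a.e.
differential inequality implies the integral inequality. -/
theorem stmt4 {X : Type*} [MetricSpace X]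
    (K : ℝ) (E : X → EReal) (hE : LowerSemicontinuous E)
    (y : ℝ → X) (hcont : ContinuousOn y (Set.Ici 0))
    (hstart : Filter.Tendsto y (nhdsWithin 0 (Set.Ioi 0)) (nhds (y 0)))
    (hAC : ∀ z : X, E z ≠ ⊤ → ∃ g : ℝ → ℝ,
      (∀ s t : ℝ, 0 < s → s ≤ t → IntervalIntegrable g MeasureTheory.volume s t ∧
        dist (y t) z ^ 2 - dist (y s) z ^ 2 = ∫ r in s..t, g r) ∧
      (∀ᵐ r ∂MeasureTheory.volume, 0 < r →
        ((1 / 2 * g r + K / 2 * dist (y r) z ^ 2 : ℝ) : EReal) ≤ E z - E (y r))) :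
    ∀ z : X, E z ≠ ⊤ → ∀ s t : ℝ, 0 ≤ s → s ≤ t →
      ((Real.exp (K * (t - s)) / 2 * dist (y t) z ^ 2
          - 1 / 2 * dist (y s) z ^ 2 : ℝ) : EReal)
        ≤ ((∫ r in (0:ℝ)..(t - s), Real.exp (K * r) : ℝ) : EReal) * (E z - E (y t)) := by
  intro z hz s t hs hst
  have hACh : ACHyp K E y := hAC
  have hbot := noBot_aux hACh
  have hc : E z = (((E z).toReal : ℝ) : EReal) := (EReal.coe_toReal hz (hbot z)).symm
  set c : ℝ := (E z).toReal with hcdef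
  rcases eq_or_lt_of_le hst with rfl | hst'
  · -- t = s
    have e1 : Real.exp (K * (s - s)) / 2 * dist (y s) z ^ 2
        - 1 / 2 * dist (y s) z ^ 2 = 0 := by
      rw [sub_self, mul_zero, Real.exp_zero]; ring
    rw [e1, sub_self, intervalIntegral.integral_same]
    rw [EReal.coe_zero, zero_mul]
  · have ht0 : 0 < t := lt_of_le_of_lt hs hst'
    have hmono := mono_aux hE hcont hACh
    -- E (y t) is real
    have hEt_ne_top : E (y t) ≠ ⊤ := by
      have hae := aeNeTop_aux hACh hz
      have h1 : ∀ᵐ r ∂volume.restrict (Set.Ioo 0 t), (0 < r → E (y r) ≠ ⊤) :=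
        ae_restrict_of_ae hae
      have h3 := h1.and (ae_restrict_mem measurableSet_Ioo)
      have hne : volume.restrict (Set.Ioo 0 t) ≠ 0 := by
        intro h0
        have : volume.restrict (Set.Ioo 0 t) Set.univ = 0 := by rw [h0]; rfl
        rw [Measure.restrict_apply_univ, Real.volume_Ioo] at this
        simp only [ENNReal.ofReal_eq_zero, sub_zero] at this
        linarith
      haveI : (ae (volume.restrict (Set.Ioo 0 t))).NeBot := ae_neBot.2 hne
      obtain ⟨aa, h4, h5⟩ := h3.exists
      exact ne_top_of_le_ne_top (h4 h5.1) (hmono aa t h5.1 h5.2.le)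
    have hm : E (y t) = (((E (y t)).toReal : ℝ) : EReal) :=
      (EReal.coe_toReal hEt_ne_top (hbot (y t))).symm
    set m : ℝ := (E (y t)).toReal with hmdef
    obtain ⟨g, hg, haez⟩ := hAC z hz
    -- core real inequality
    have core : ∀ s' : ℝ, 0 < s' → s' ≤ t →
        Real.exp (K * (t - s')) * dist (y t) z ^ 2 - dist (y s') z ^ 2
          ≤ 2 * ((∫ u in (0:ℝ)..(t - s'), Real.exp (K * u)) * (c - m)) := by
      intro s' hs'0 hs't
      have hb : ∀ᵐ r ∂volume.restrict (Set.Ioc s' t),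
          g r + K * (dist (y s') z ^ 2 + ∫ v in s'..r, g v) ≤ 2 * (c - m) := by
        filter_upwards [ae_restrict_of_ae haez,
          ae_restrict_of_ae (aeReal_aux hACh hz),
          ae_restrict_mem measurableSet_Ioc] with r h1 h2 h3
        have hr0 : 0 < r := hs'0.trans h3.1
        have hreal := h2 hr0
        have hub := h1 hr0
        rw [hc, hreal, ← EReal.coe_sub, EReal.coe_le_coe_iff] at hub
        have hmr : (m : EReal) ≤ (((E (y r)).toReal : ℝ) : EReal) := by
          have := hmono r t hr0 h3.2
          rw [hm] at this
          rw [hreal] at this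
          exact this
        have hmr' : m ≤ (E (y r)).toReal := EReal.coe_le_coe_iff.1 hmr
        have hDr : dist (y s') z ^ 2 + ∫ v in s'..r, g v = dist (y r) z ^ 2 := by
          have := (hg s' r hs'0 h3.1.le).2
          linarith
        rw [hDr]
        linarith
      have hstep := stepA_aux K s' t hs't g (fun _ => c - m) (dist (y s') z ^ 2)
        (hg s' t hs'0 hs't).1 intervalIntegrable_const hb
      have hDt : dist (y s') z ^ 2 + ∫ v in s'..t, g v = dist (y t) z ^ 2 := by
        have := (hg s' t hs'0 hs't).2
        linarith
      rw [hDt] at hstep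
      have hw : (∫ r in s'..t, Real.exp (K * (r - s')) * (c - m))
          = (∫ u in (0:ℝ)..(t - s'), Real.exp (K * u)) * (c - m) := by
        rw [intervalIntegral.integral_mul_const]
        congr 1
        have h6 := intervalIntegral.integral_comp_sub_right
          (a := s') (b := t) (fun u => Real.exp (K * u)) s'
        rw [sub_self] at h6
        exact h6
      rw [hw] at hstep
      exact hstep
    -- extend to s = 0 by continuity
    have coreS : Real.exp (K * (t - s)) * dist (y t) z ^ 2 - dist (y s) z ^ 2
        ≤ 2 * ((∫ u in (0:ℝ)..(t - s), Real.exp (K * u)) * (c - m)) := by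
      rcases lt_or_eq_of_le hs with hs0 | hs0
      · exact core s hs0 hst'.le
      · subst hs0
        set Φ : ℝ → ℝ := fun s' =>
          Real.exp (K * (t - s')) * dist (y t) z ^ 2 - dist (y s') z ^ 2 with hΦ
        set Ψ : ℝ → ℝ := fun s' =>
          2 * ((∫ u in (0:ℝ)..(t - s'), Real.exp (K * u)) * (c - m)) with hΨ
        have hev : ∀ᶠ s' in nhdsWithin 0 (Set.Ioi 0), Φ s' ≤ Ψ s' := by
          have hmem : Set.Ioo (0:ℝ) t ∈ nhdsWithin 0 (Set.Ioi 0) :=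
            Ioo_mem_nhdsGT_of_mem ⟨le_rfl, ht0⟩
          filter_upwards [hmem] with s' hs'
          exact core s' hs'.1 hs'.2.le
        have h1 : Filter.Tendsto Φ (nhdsWithin 0 (Set.Ioi 0)) (nhds (Φ 0)) := by
          apply Filter.Tendsto.sub
          · apply Filter.Tendsto.mul
            · exact ((Real.continuous_exp.comp
                (continuous_const.mul (continuous_const.sub continuous_id))).tendsto 0).mono_left
                nhdsWithin_le_nhds
            · exact tendsto_const_nhds
          · have hd : Filter.Tendsto (fun s' => dist (y s') z ^ 2)
                (nhdsWithin 0 (Set.Ioi 0)) (nhds (dist (y 0) z ^ 2)) := by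
              have hdc : Continuous (fun x : X => dist x z ^ 2) :=
                (continuous_id.dist continuous_const).pow 2
              exact (hdc.tendsto (y 0)).comp hstart
            exact hd
        have h2 : Filter.Tendsto Ψ (nhdsWithin 0 (Set.Ioi 0)) (nhds (Ψ 0)) := by
          apply Filter.Tendsto.const_mul
          apply Filter.Tendsto.mul_const
          have hPcont : Continuous (fun x : ℝ => ∫ u in (0:ℝ)..x, Real.exp (K * u)) :=
            intervalIntegral.continuous_primitive
              (fun a b => (Real.continuous_exp.comp
                (continuous_const.mul continuous_id)).intervalIntegrable a b) 0
          exact ((hPcont.comp (continuous_const.sub continuous_id)).tendsto 0).mono_left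
            nhdsWithin_le_nhds
        exact le_of_tendsto_of_tendsto h1 h2 hev
    -- package into EReal
    rw [hc, hm, ← EReal.coe_sub, ← EReal.coe_mul, EReal.coe_le_coe_iff]
    linarith
end

section
/- Let (X,d) be a metric space, K ∈ ℝ, E: X → ℝ ∪ {+∞} lower semi-continuous, and μ a Borel probability measure on X with finite variance. Suppose ȳ is a barycenter of μ (i.e. ∫ d²(ȳ,z) dμ(z) = Var(μ) := inf_x ∫ d²(x,z)dμ(z)), and suppose there exists an EVI_K gradient flow (y_t)_{t>0} of E starting from ȳ (in particular satisfying the integral inequality (e^{Kt}/2)d²(y_t,z) − (1/2)d²(ȳ,z) ≤ I_K(t)(E(z) − E(y_t)) for all z ∈ D(E), with y_t → ȳ as t → 0). Then Jensen's inequality holds: E(ȳ) ≤ ∫ E(z) dμ(z) − (K/2)·Var(μ). -/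
set_option linter.unusedSectionVars false
set_option maxHeartbeats 1000000

open MeasureTheory
open scoped ENNReal

/-- The positive part of an extended real, as an element of `ℝ≥0∞`. -/
noncomputable def ERealPos (a : EReal) : ℝ≥0∞ :=
  if a = ⊤ then ⊤ else ENNReal.ofReal a.toReal

/-- Integral of an `EReal`-valued function (with values in `ℝ ∪ {+∞}`):
positive part minus negative part, computed with lower integrals. -/
noncomputable def ERealIntegral {X : Type*} [MeasurableSpace X]
    (μ : MeasureTheory.Measure X) (E : X → EReal) : EReal :=
  ((∫⁻ z, ERealPos (E z) ∂μ : ℝ≥0∞) : EReal) - ((∫⁻ z, ERealPos (-(E z)) ∂μ : ℝ≥0∞) : EReal)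

section Helpers

lemma IK_pos (K : ℝ) {t : ℝ} (ht : 0 < t) : 0 < ∫ r in (0:ℝ)..t, Real.exp (K * r) := by
  apply intervalIntegral.intervalIntegral_pos_of_pos_on
  · exact (Real.continuous_exp.comp (continuous_const.mul continuous_id)).intervalIntegrable 0 t
  · intro x _; exact Real.exp_pos _
  · exact ht

lemma IK_eq (K : ℝ) (t : ℝ) : Real.exp (K * t) - 1 = K * ∫ r in (0:ℝ)..t, Real.exp (K * r) := by
  rcases eq_or_ne K 0 with rfl | hK
  · simp
  · rw [intervalIntegral.integral_comp_mul_left (f := Real.exp) hK]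
    simp [integral_exp]
    field_simp

variable {X : Type*} [MetricSpace X] [MeasurableSpace X] [BorelSpace X]
  (μ : Measure X) [IsProbabilityMeasure μ]

lemma edist_sq_eq (x z : X) : edist x z ^ 2 = ENNReal.ofReal (dist x z ^ 2) := by
  rw [edist_dist, ← ENNReal.ofReal_pow dist_nonneg]

lemma lint_lt_top {ybar : X} (hfin : ∫⁻ z, edist ybar z ^ 2 ∂μ < ⊤) (x : X) :
    ∫⁻ z, edist x z ^ 2 ∂μ < ⊤ := by
  have h : ∀ z, edist x z ^ 2 ≤ 4 * edist x ybar ^ 2 + 4 * edist ybar z ^ 2 := by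
    intro z
    calc edist x z ^ 2 ≤ (edist x ybar + edist ybar z) ^ 2 := by gcongr; exact edist_triangle _ _ _
      _ ≤ _ := by
          have h1 : edist x ybar + edist ybar z ≤ 2 * max (edist x ybar) (edist ybar z) := by
            rw [two_mul]; exact add_le_add (le_max_left _ _) (le_max_right _ _)
          calc (edist x ybar + edist ybar z) ^ 2
              ≤ (2 * max (edist x ybar) (edist ybar z)) ^ 2 := by gcongr
            _ = 4 * (max (edist x ybar) (edist ybar z)) ^ 2 := by ring
            _ ≤ 4 * (edist x ybar ^ 2 + edist ybar z ^ 2) := by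
                gcongr
                rcases max_cases (edist x ybar) (edist ybar z) with ⟨h, _⟩ | ⟨h, _⟩ <;> rw [h]
                · exact le_self_add
                · exact le_add_self
            _ = _ := by ring
  calc ∫⁻ z, edist x z ^ 2 ∂μ ≤ ∫⁻ z, (4 * edist x ybar ^ 2 + 4 * edist ybar z ^ 2) ∂μ :=
        lintegral_mono h
    _ = 4 * edist x ybar ^ 2 * μ Set.univ + 4 * ∫⁻ z, edist ybar z ^ 2 ∂μ := by
        rw [lintegral_add_left (by fun_prop), lintegral_const, lintegral_const_mul _ (by fun_prop)]
    _ < ⊤ := by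
        apply ENNReal.add_lt_top.2
        constructor
        · exact ENNReal.mul_lt_top
            (ENNReal.mul_lt_top (by simp) (ENNReal.pow_lt_top (edist_lt_top x ybar)))
            (measure_lt_top μ _)
        · exact ENNReal.mul_lt_top (by simp) hfin

lemma integrable_dist_sq {x : X} (hfin : ∫⁻ z, edist x z ^ 2 ∂μ < ⊤) :
    Integrable (fun z => dist x z ^ 2) μ := by
  refine ⟨(by fun_prop : Continuous fun z : X => dist x z ^ 2).aestronglyMeasurable, ?_⟩
  rw [hasFiniteIntegral_iff_ofReal (Filter.Eventually.of_forall fun z => by positivity)]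
  simpa only [← edist_sq_eq] using hfin

lemma integral_dist_sq_eq {x : X} :
    ∫ z, dist x z ^ 2 ∂μ = (∫⁻ z, edist x z ^ 2 ∂μ).toReal := by
  rw [integral_eq_lintegral_of_nonneg_ae (Filter.Eventually.of_forall fun z => by positivity)
    (by fun_prop : Continuous fun z : X => dist x z ^ 2).aestronglyMeasurable]
  congr 1
  apply lintegral_congr fun z => (edist_sq_eq x z).symm

end Helpers

/-- Jensen's inequality for a barycenter, from the existence of an `EVI_K`
gradient flow (in its integral formulation) starting at the barycenter. -/
theorem stmt5 {X : Type*} [MetricSpace X] [MeasurableSpace X] [BorelSpace X]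
    (K : ℝ) (E : X → EReal) (hE : LowerSemicontinuous E)
    (μ : Measure X) [IsProbabilityMeasure μ]
    (hVar : (⨅ x : X, ∫⁻ z, edist x z ^ 2 ∂μ) < ⊤)
    (ybar : X) (hbar : ∫⁻ z, edist ybar z ^ 2 ∂μ = ⨅ x : X, ∫⁻ z, edist x z ^ 2 ∂μ)
    (y : ℝ → X) (hstart : Filter.Tendsto y (nhdsWithin 0 (Set.Ioi 0)) (nhds ybar))
    (hEVI : ∀ z : X, E z ≠ ⊤ → ∀ t : ℝ, 0 < t →
      ((Real.exp (K * t) / 2 * dist (y t) z ^ 2 - 1 / 2 * dist ybar z ^ 2 : ℝ) : EReal)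
        ≤ ((∫ r in (0:ℝ)..t, Real.exp (K * r) : ℝ) : EReal) * (E z - E (y t))) :
    E ybar ≤ ERealIntegral μ E -
      ((K / 2 * (⨅ x : X, ∫⁻ z, edist x z ^ 2 ∂μ).toReal : ℝ) : EReal) := by
  classical
  -- notation
  set V : ℝ≥0∞ := ⨅ x : X, ∫⁻ z, edist x z ^ 2 ∂μ with hV
  set v : ℝ := V.toReal with hv
  have hbarfin : ∫⁻ z, edist ybar z ^ 2 ∂μ < ⊤ := by rw [hbar]; exact hVar
  -- trivial case: E ybar = ⊥
  by_cases hbot : E ybar = ⊥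
  · rw [hbot]; exact bot_le
  -- trivial case: E ≡ ⊤
  by_cases hD : ∀ z : X, E z = ⊤
  · have hP : ∫⁻ z, ERealPos (E z) ∂μ = ⊤ := by
      have : ∀ z, ERealPos (E z) = ⊤ := fun z => by simp [ERealPos, hD z]
      simp only [this, lintegral_const, measure_univ, mul_one]
    have hN : ∫⁻ z, ERealPos (-(E z)) ∂μ = 0 := by
      have : ∀ z, ERealPos (-(E z)) = 0 := fun z => by
        simp [ERealPos, hD z, EReal.neg_top]
      simp [this]
    rw [ERealIntegral, hP, hN]
    simp only [EReal.coe_ennreal_top, EReal.coe_ennreal_zero, sub_zero]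
    rw [EReal.top_sub_coe]
    exact le_top
  push_neg at hD
  obtain ⟨z₀, hz₀⟩ := hD
  -- Step A: the flow never has energy ⊤
  have htop : ∀ t : ℝ, 0 < t → E (y t) ≠ ⊤ := by
    intro t ht h
    have h1 := hEVI z₀ hz₀ t ht
    rw [h, EReal.sub_top, EReal.mul_bot_of_pos (by exact_mod_cast IK_pos K ht)] at h1
    exact (EReal.coe_ne_bot _) (le_bot_iff.1 h1)
  -- Step B: finite-energy points have energy ≠ ⊥
  have hbotz : ∀ z : X, E z ≠ ⊤ → E z ≠ ⊥ := by
    intro z hz h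
    have h1 := hEVI z hz 1 one_pos
    rw [h, EReal.bot_sub, EReal.mul_bot_of_pos (by exact_mod_cast IK_pos K one_pos)] at h1
    exact (EReal.coe_ne_bot _) (le_bot_iff.1 h1)
  -- Step D: real form of the EVI inequality
  have hreal : ∀ z : X, E z ≠ ⊤ → ∀ t : ℝ, 0 < t → E (y t) ≠ ⊥ →
      Real.exp (K * t) / 2 * dist (y t) z ^ 2 - 1 / 2 * dist ybar z ^ 2
        ≤ (∫ r in (0:ℝ)..t, Real.exp (K * r)) * ((E z).toReal - (E (y t)).toReal) := by
    intro z hz t ht hyb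
    have h1 := hEVI z hz t ht
    rw [← EReal.coe_toReal hz (hbotz z hz), ← EReal.coe_toReal (htop t ht) hyb,
      ← EReal.coe_sub, ← EReal.coe_mul] at h1
    exact_mod_cast h1
  -- Step C: find t₀ > 0 with E (y t₀) real
  obtain ⟨c₀, _, hc₀⟩ := EReal.exists_between_coe_real (bot_lt_iff_ne_bot.2 hbot)
  have hev : ∀ᶠ t in nhdsWithin 0 (Set.Ioi 0), (c₀ : EReal) < E (y t) ∧ 0 < t := by
    filter_upwards [hstart.eventually (hE ybar _ hc₀), self_mem_nhdsWithin] with t h1 h2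
    exact ⟨h1, h2⟩
  obtain ⟨t₀, hct₀, ht₀⟩ := hev.exists
  set C₀ : ℝ := (E (y t₀)).toReal with hC₀
  set I₀ : ℝ := ∫ r in (0:ℝ)..t₀, Real.exp (K * r) with hI₀
  have hI₀pos : 0 < I₀ := IK_pos K ht₀
  have hyt₀bot : E (y t₀) ≠ ⊥ := fun h => by simp [h] at hct₀
  -- Step E: pointwise lower bound on the energy
  have hlow : ∀ z : X, E z ≠ ⊤ →
      -(E z).toReal ≤ -C₀ + 1 / (2 * I₀) * dist ybar z ^ 2 := by
    intro z hz
    have h1 := hreal z hz t₀ ht₀ hyt₀bot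
    have h2 : (0:ℝ) ≤ Real.exp (K * t₀) / 2 * dist (y t₀) z ^ 2 := by positivity
    have key : -(E z).toReal * I₀ ≤ (-C₀ + 1 / (2 * I₀) * dist ybar z ^ 2) * I₀ := by
      have h3 : (-C₀ + 1 / (2 * I₀) * dist ybar z ^ 2) * I₀
          = -C₀ * I₀ + dist ybar z ^ 2 / 2 := by
        field_simp
      rw [h3]
      nlinarith [h1, h2]
    exact le_of_mul_le_mul_right key hI₀pos
  -- Step F: the negative part has finite integral
  have hN : ∫⁻ z, ERealPos (-(E z)) ∂μ < ⊤ := by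
    have hpw : ∀ z, ERealPos (-(E z)) ≤
        ENNReal.ofReal (-C₀) + ENNReal.ofReal (1 / (2 * I₀)) * edist ybar z ^ 2 := by
      intro z
      by_cases hz : E z = ⊤
      · have : ERealPos (-(E z)) = 0 := by simp [ERealPos, hz, EReal.neg_top]
        rw [this]; exact zero_le
      · have hzb := hbotz z hz
        have hne : -(E z) ≠ ⊤ := by
          simp only [ne_eq, EReal.neg_eq_top_iff]; exact hzb
        rw [ERealPos, if_neg hne, EReal.toReal_neg_eq, edist_sq_eq,
          ← ENNReal.ofReal_mul (by positivity)]
        calc ENNReal.ofReal (-(E z).toReal)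
            ≤ ENNReal.ofReal (-C₀ + 1 / (2 * I₀) * dist ybar z ^ 2) :=
              ENNReal.ofReal_le_ofReal (hlow z hz)
          _ ≤ _ := ENNReal.ofReal_add_le
    calc ∫⁻ z, ERealPos (-(E z)) ∂μ
        ≤ ∫⁻ z, (ENNReal.ofReal (-C₀) + ENNReal.ofReal (1 / (2 * I₀)) * edist ybar z ^ 2) ∂μ :=
          lintegral_mono hpw
      _ = ENNReal.ofReal (-C₀) * μ Set.univ
          + ENNReal.ofReal (1 / (2 * I₀)) * ∫⁻ z, edist ybar z ^ 2 ∂μ := by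
          rw [lintegral_add_left (by fun_prop), lintegral_const,
            lintegral_const_mul _ (by fun_prop)]
      _ < ⊤ := by
          apply ENNReal.add_lt_top.2
          exact ⟨ENNReal.mul_lt_top ENNReal.ofReal_lt_top (measure_lt_top μ _),
            ENNReal.mul_lt_top ENNReal.ofReal_lt_top hbarfin⟩
  -- Step G: if the positive part is infinite, done
  by_cases hP : ∫⁻ z, ERealPos (E z) ∂μ = ⊤
  · rw [ERealIntegral, hP]
    have hNne : ((∫⁻ z, ERealPos (-(E z)) ∂μ : ℝ≥0∞) : EReal) ≠ ⊤ := by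
      simp only [ne_eq, EReal.coe_ennreal_eq_top_iff]
      exact hN.ne
    rw [← EReal.coe_toReal hNne (EReal.coe_ennreal_ne_bot _), EReal.coe_ennreal_top,
      EReal.top_sub_coe, EReal.top_sub_coe]
    exact le_top
  -- Step H: both parts finite
  have hEmeas : Measurable E := hE.measurable
  have hae : ∀ᵐ z ∂μ, E z ≠ ⊤ := by
    rw [ae_iff]
    simp only [not_not]
    by_contra h
    apply hP
    have hmeas : MeasurableSet {z : X | E z = ⊤} := hEmeas (measurableSet_singleton ⊤)
    refine top_unique ?_
    calc (⊤ : ℝ≥0∞) = ⊤ * μ {z : X | E z = ⊤} := by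
          rw [ENNReal.top_mul h]
      _ = ∫⁻ z in {z : X | E z = ⊤}, ⊤ ∂μ := by rw [setLIntegral_const]
      _ = ∫⁻ z in {z : X | E z = ⊤}, ERealPos (E z) ∂μ := by
          apply setLIntegral_congr_fun hmeas
          exact fun z hz => by simp [ERealPos, Set.mem_setOf_eq.mp hz]
      _ ≤ ∫⁻ z, ERealPos (E z) ∂μ := setLIntegral_le_lintegral _ _
  set f : X → ℝ := fun z => (E z).toReal with hf
  have hfmeas : Measurable f := hEmeas.ereal_toReal
  -- integrability of f
  have hfint : Integrable f μ := by
    refine ⟨hfmeas.aestronglyMeasurable, ?_⟩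
    rw [HasFiniteIntegral]
    have hpw : ∀ z, (‖f z‖₊ : ℝ≥0∞) ≤ ERealPos (E z) + ERealPos (-(E z)) := by
      intro z
      rw [← enorm_eq_nnnorm, Real.enorm_eq_ofReal_abs]
      by_cases hz : E z = ⊤
      · simp [ERealPos, hz]
      · have hzb := hbotz z hz
        have hne : -(E z) ≠ ⊤ := by simp only [ne_eq, EReal.neg_eq_top_iff]; exact hzb
        rw [ERealPos, if_neg hz, ERealPos, if_neg hne, EReal.toReal_neg_eq]
        rcases abs_cases (f z) with ⟨h, _⟩ | ⟨h, _⟩ <;> rw [hf] at h ⊢ <;> rw [h]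
        · exact le_self_add
        · exact le_add_self
    calc ∫⁻ z, (‖f z‖₊ : ℝ≥0∞) ∂μ ≤ ∫⁻ z, (ERealPos (E z) + ERealPos (-(E z))) ∂μ :=
          lintegral_mono hpw
      _ = (∫⁻ z, ERealPos (E z) ∂μ) + ∫⁻ z, ERealPos (-(E z)) ∂μ := by
          apply lintegral_add_left
          have : (fun z => ERealPos (E z)) = fun z =>
              if E z = ⊤ then (⊤ : ℝ≥0∞) else ENNReal.ofReal (E z).toReal := rfl
          rw [this]
          exact Measurable.ite (hEmeas (measurableSet_singleton ⊤)) measurable_const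
            (ENNReal.measurable_ofReal.comp hEmeas.ereal_toReal)
      _ < ⊤ := ENNReal.add_lt_top.2 ⟨lt_top_iff_ne_top.2 hP, hN⟩
  -- identify ERealIntegral with the Bochner integral of f
  have hcoe : ∀ {x : ℝ≥0∞}, x ≠ ⊤ → (x : EReal) = ((x.toReal : ℝ) : EReal) := by
    intro x hx
    nth_rewrite 1 [← EReal.coe_toReal (x := (x : EReal)) (by simpa using hx)
      (EReal.coe_ennreal_ne_bot _)]
    rw [EReal.toReal_coe_ennreal]
  have hfaeq : ∀ᵐ z ∂μ, ENNReal.ofReal (f z) = ERealPos (E z) := by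
    filter_upwards [hae] with z hz
    rw [ERealPos, if_neg hz]
  have hfneq : ∀ᵐ z ∂μ, ENNReal.ofReal (-f z) = ERealPos (-(E z)) := by
    filter_upwards [hae] with z hz
    have hne : -(E z) ≠ ⊤ := by
      simp only [ne_eq, EReal.neg_eq_top_iff]; exact hbotz z hz
    rw [ERealPos, if_neg hne, EReal.toReal_neg_eq]
  have h2 : ∫ z, f z ∂μ
      = (∫⁻ z, ERealPos (E z) ∂μ).toReal - (∫⁻ z, ERealPos (-(E z)) ∂μ).toReal := by
    rw [integral_eq_lintegral_pos_part_sub_lintegral_neg_part hfint,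
      lintegral_congr_ae hfaeq, lintegral_congr_ae hfneq]
  have hEI : ERealIntegral μ E = ((∫ z, f z ∂μ : ℝ) : EReal) := by
    rw [ERealIntegral, hcoe hP, hcoe hN.ne, h2, EReal.coe_sub]
  set F : ℝ := ∫ z, f z ∂μ with hF
  -- the key quantitative estimate
  suffices hsuf : ∀ c : ℝ, (c : EReal) < E ybar → c ≤ F - K / 2 * v by
    rw [hEI, ← EReal.coe_sub]
    by_contra hcon
    rw [not_le] at hcon
    obtain ⟨c, h1', h2'⟩ := EReal.exists_between_coe_real hcon
    have h3' := hsuf c h2'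
    rw [EReal.coe_lt_coe_iff] at h1'
    linarith
  intro c hc
  obtain ⟨t, hct, ht⟩ :=
    (Filter.Eventually.and (hstart.eventually (hE ybar _ hc)) self_mem_nhdsWithin).exists
  have ht : (0:ℝ) < t := ht
  set I : ℝ := ∫ r in (0:ℝ)..t, Real.exp (K * r) with hI
  have hIpos : 0 < I := IK_pos K ht
  have hytt : E (y t) ≠ ⊤ := htop t ht
  have hytb : E (y t) ≠ ⊥ := fun h => by simp [h] at hct
  have hcf : c < (E (y t)).toReal := by
    rw [← EReal.coe_lt_coe_iff, EReal.coe_toReal hytt hytb]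
    exact hct
  have hmono : ∀ᵐ z ∂μ, Real.exp (K * t) / 2 * dist (y t) z ^ 2 - 1 / 2 * dist ybar z ^ 2
      ≤ I * (f z - c) := by
    filter_upwards [hae] with z hz
    have h1' := hreal z hz t ht hytb
    nlinarith [hIpos, hcf]
  have hint1 : Integrable
      (fun z => Real.exp (K * t) / 2 * dist (y t) z ^ 2 - 1 / 2 * dist ybar z ^ 2) μ :=
    ((integrable_dist_sq μ (lint_lt_top μ hbarfin _)).const_mul _).sub
      ((integrable_dist_sq μ hbarfin).const_mul _)
  have hint2 : Integrable (fun z => I * (f z - c)) μ :=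
    (hfint.sub (integrable_const c)).const_mul I
  have hII := integral_mono_ae hint1 hint2 hmono
  set A : ℝ := (∫⁻ z, edist (y t) z ^ 2 ∂μ).toReal with hA
  have hL : ∫ z, (Real.exp (K * t) / 2 * dist (y t) z ^ 2 - 1 / 2 * dist ybar z ^ 2) ∂μ
      = Real.exp (K * t) / 2 * A - 1 / 2 * v := by
    rw [integral_sub ((integrable_dist_sq μ (lint_lt_top μ hbarfin _)).const_mul _)
      ((integrable_dist_sq μ hbarfin).const_mul _), integral_const_mul, integral_const_mul,
      integral_dist_sq_eq, integral_dist_sq_eq, hbar]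
  have hR : ∫ z, I * (f z - c) ∂μ = I * (F - c) := by
    rw [integral_const_mul, integral_sub hfint (integrable_const c), integral_const]
    simp [measure_univ, hF]
  rw [hL, hR] at hII
  have hAv : v ≤ A := by
    apply ENNReal.toReal_mono (lint_lt_top μ hbarfin (y t)).ne
    exact iInf_le _ (y t)
  have hv0 : 0 ≤ v := ENNReal.toReal_nonneg
  have hIK := IK_eq K t
  have h3' : Real.exp (K * t) / 2 * v - 1 / 2 * v ≤ I * (F - c) := by
    nlinarith [hAv, Real.exp_pos (K * t), hII]
  have h4' : Real.exp (K * t) / 2 * v - 1 / 2 * v = K / 2 * v * I := by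
    linear_combination (v / 2) * hIK
  have key : K / 2 * v * I ≤ (F - c) * I := by
    rw [← h4']
    linarith [h3']
  have h5' : K / 2 * v ≤ F - c := le_of_mul_le_mul_right key hIpos
  linarith
end

section
/- Let (X,d) be a metric space, K ∈ ℝ, E lower semi-continuous, μ a probability measure with finite variance, ε ≥ 0, and y a point with ∫ d²(y,z) dμ(z) ≤ Var(μ) + ε. If there is an EVI_K gradient flow (y_t) of E starting from y, then for all t > 0: E(y_t) ≤ ∫ E(z) dμ(z) − (K/2)Var(μ) + ε/(2 I_K(t)), where I_K(t) = ∫₀^t e^{Kr} dr. -/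
open MeasureTheory
open scoped ENNReal NNReal

lemma ERealPos_coe (r : ℝ) : ERealPos (r : EReal) = ENNReal.ofReal r := by
  simp [ERealPos]

lemma ERealPos_mono : Monotone ERealPos := by
  intro a b h
  unfold ERealPos
  by_cases hb : b = ⊤
  · simp [hb]
  have ha : a ≠ ⊤ := fun h' => hb (top_le_iff.1 (h' ▸ h))
  rw [if_neg ha, if_neg hb]
  rcases eq_or_ne a ⊥ with h0 | h0
  · simp [h0]
  exact ENNReal.ofReal_le_ofReal (EReal.toReal_le_toReal h h0 hb)

lemma ennreal_coe_eq_real_coe {x : ℝ≥0∞} (hx : x ≠ ⊤) :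
    (x : EReal) = ((x.toReal : ℝ) : EReal) := by
  lift x to ℝ≥0 using hx
  rw [EReal.coe_nnreal_eq_coe_real]
  simp

/-- Approximate Jensen's inequality along an `EVI_K` gradient flow started at
an `ε`-approximate barycenter. -/
theorem stmt6 {X : Type*} [MetricSpace X] [MeasurableSpace X] [BorelSpace X]
    (K : ℝ) (E : X → EReal) (hE : LowerSemicontinuous E)
    (μ : Measure X) [IsProbabilityMeasure μ]
    (hVar : (⨅ x : X, ∫⁻ z, edist x z ^ 2 ∂μ) < ⊤)
    (ε : ℝ) (hε : 0 ≤ ε) (y₀ : X)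
    (hnear : ∫⁻ z, edist y₀ z ^ 2 ∂μ
      ≤ (⨅ x : X, ∫⁻ z, edist x z ^ 2 ∂μ) + ENNReal.ofReal ε)
    (y : ℝ → X)
    (hEVI : ∀ z : X, E z ≠ ⊤ → ∀ t : ℝ, 0 < t →
      ((Real.exp (K * t) / 2 * dist (y t) z ^ 2 - 1 / 2 * dist y₀ z ^ 2 : ℝ) : EReal)
        ≤ ((∫ r in (0:ℝ)..t, Real.exp (K * r) : ℝ) : EReal) * (E z - E (y t))) :
    ∀ t : ℝ, 0 < t →
      E (y t) ≤ ERealIntegral μ E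
        - ((K / 2 * (⨅ x : X, ∫⁻ z, edist x z ^ 2 ∂μ).toReal : ℝ) : EReal)
        + ((ε / (2 * ∫ r in (0:ℝ)..t, Real.exp (K * r)) : ℝ) : EReal) := by
  intro t ht
  set I : ℝ := ∫ r in (0:ℝ)..t, Real.exp (K * r) with hIdef
  have hI : 0 < I := by
    apply intervalIntegral.intervalIntegral_pos_of_pos (f := fun r => Real.exp (K * r)) ?_
      (fun r => Real.exp_pos _) ht
    exact (Real.continuous_exp.comp (continuous_const.mul continuous_id)).intervalIntegrable _ _
  have hKI : Real.exp (K * t) - 1 = K * I := by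
    rcases eq_or_ne K 0 with h | h
    · simp [hIdef, h]
    · rw [hIdef, intervalIntegral.integral_comp_mul_left (fun u => Real.exp u) h]
      simp [integral_exp, Real.exp_zero]
      field_simp
  set Var : ℝ≥0∞ := ⨅ x : X, ∫⁻ z, edist x z ^ 2 ∂μ with hVdef
  have hVarne : Var ≠ ⊤ := hVar.ne
  set V : ℝ := Var.toReal with hVreal
  -- edist vs dist
  have hedist : ∀ x z : X, edist x z ^ 2 = ENNReal.ofReal (dist x z ^ 2) := by
    intro x z
    rw [edist_dist, ← ENNReal.ofReal_pow dist_nonneg]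
  have hedist_meas : ∀ x : X, Measurable (fun z => edist x z ^ 2) := by
    intro x
    exact ((ENNReal.continuous_pow 2).comp (continuous_const.edist continuous_id)).measurable
  -- finiteness of the second moment at y₀
  set L0 : ℝ≥0∞ := ∫⁻ z, edist y₀ z ^ 2 ∂μ with hL0def
  have hL0 : L0 ≠ ⊤ :=
    (lt_of_le_of_lt hnear (ENNReal.add_lt_top.2 ⟨hVar, ENNReal.ofReal_lt_top⟩)).ne
  set Lt : ℝ≥0∞ := ∫⁻ z, edist (y t) z ^ 2 ∂μ with hLtdef
  -- a helper for lintegrals of affine functions of edist²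
  have haff : ∀ (x : X) (c0 c1 : ℝ≥0∞),
      ∫⁻ z, (c0 + c1 * edist x z ^ 2) ∂μ = c0 + c1 * ∫⁻ z, edist x z ^ 2 ∂μ := by
    intro x c0 c1
    rw [lintegral_add_left measurable_const, lintegral_const_mul _ (hedist_meas x),
      lintegral_const, measure_univ, mul_one]
  -- main case split on E (y t)
  rcases eq_or_ne (E (y t)) ⊥ with hbot | hbot
  · rw [hbot]; exact bot_le
  rcases eq_or_ne (E (y t)) ⊤ with htop | htop
  · -- then E ≡ ⊤ everywhere
    have hall : ∀ z, E z = ⊤ := by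
      intro z
      by_contra hz
      have h1 := hEVI z hz t ht
      rw [htop, EReal.sub_top, EReal.coe_mul_bot_of_pos hI, le_bot_iff] at h1
      exact EReal.coe_ne_bot _ h1
    have hpos : ∫⁻ z, ERealPos (E z) ∂μ = ⊤ := by
      simp [hall, ERealPos, lintegral_const, measure_univ]
    have hneg : ∫⁻ z, ERealPos (-(E z)) ∂μ = 0 := by
      simp [hall, ERealPos]
    have : ERealIntegral μ E = ⊤ := by
      rw [ERealIntegral, hpos, hneg]
      simp [EReal.coe_ennreal_top]
    rw [this, EReal.top_sub_coe, EReal.top_add_coe]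
    exact le_top
  -- real case
  obtain ⟨a, ha⟩ : ∃ a : ℝ, E (y t) = (a : EReal) :=
    ⟨(E (y t)).toReal, (EReal.coe_toReal htop hbot).symm⟩
  -- the comparison function
  set c1 : ℝ := Real.exp (K * t) / (2 * I) with hc1def
  set c2 : ℝ := 1 / (2 * I) with hc2def
  have hc1pos : 0 < c1 := by positivity
  have hc2pos : 0 < c2 := by positivity
  have hc12 : c1 - c2 = K / 2 := by
    rw [hc1def, hc2def]
    field_simp
    linarith [hKI]
  set g : X → ℝ := fun z => a + c1 * dist (y t) z ^ 2 - c2 * dist y₀ z ^ 2 with hgdef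
  -- key pointwise bound : g z ≤ E z
  have key : ∀ z : X, ((g z : ℝ) : EReal) ≤ E z := by
    intro z
    rcases eq_or_ne (E z) ⊤ with hz | hz
    · rw [hz]; exact le_top
    have h1 := hEVI z hz t ht
    rw [ha] at h1
    rcases eq_or_ne (E z) ⊥ with hzb | hzb
    · rw [hzb, EReal.bot_sub, EReal.coe_mul_bot_of_pos hI, le_bot_iff] at h1
      exact absurd h1 (EReal.coe_ne_bot _)
    obtain ⟨b, hb⟩ : ∃ b : ℝ, E z = (b : EReal) :=
      ⟨(E z).toReal, (EReal.coe_toReal hz hzb).symm⟩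
    rw [hb] at h1 ⊢
    rw [← EReal.coe_sub, ← EReal.coe_mul, EReal.coe_le_coe_iff] at h1
    rw [EReal.coe_le_coe_iff]
    have h2 : c1 * dist (y t) z ^ 2 - c2 * dist y₀ z ^ 2 ≤ b - a := by
      rw [hc1def, hc2def]
      rw [div_mul_eq_mul_div, div_mul_eq_mul_div, div_sub_div_same, div_le_iff₀ (by linarith)]
      nlinarith [h1]
    rw [hgdef]
    simp only []
    linarith
  -- bound for the negative part
  have hneg_pt : ∀ z, ERealPos (-(E z)) ≤ ENNReal.ofReal (|a| + c2 * dist y₀ z ^ 2) := by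
    intro z
    calc ERealPos (-(E z)) ≤ ERealPos (-((g z : ℝ) : EReal)) :=
          ERealPos_mono (EReal.neg_le_neg_iff.2 (key z))
      _ = ENNReal.ofReal (-(g z)) := by rw [← EReal.coe_neg, ERealPos_coe]
      _ ≤ ENNReal.ofReal (|a| + c2 * dist y₀ z ^ 2) := by
          apply ENNReal.ofReal_le_ofReal
          have h3 : 0 ≤ c1 * dist (y t) z ^ 2 := by positivity
          have h4 : -a ≤ |a| := neg_le_abs a
          rw [hgdef]; simp only []; linarith
  have hneg_bound : ∫⁻ z, ENNReal.ofReal (|a| + c2 * dist y₀ z ^ 2) ∂μ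
      = ENNReal.ofReal |a| + ENNReal.ofReal c2 * L0 := by
    rw [hL0def, ← haff y₀]
    congr 1 with z
    rw [ENNReal.ofReal_add (abs_nonneg a) (by positivity),
      ENNReal.ofReal_mul hc2pos.le, hedist]
  have hNfin : ∫⁻ z, ERealPos (-(E z)) ∂μ ≠ ⊤ := by
    apply ne_top_of_le_ne_top ?_ (lintegral_mono hneg_pt)
    rw [hneg_bound]
    exact (ENNReal.add_lt_top.2 ⟨ENNReal.ofReal_lt_top,
      ENNReal.mul_lt_top ENNReal.ofReal_lt_top hL0.lt_top⟩).ne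
  -- split on finiteness of the second moment at y t
  rcases eq_or_ne Lt ⊤ with hLt | hLt
  · -- positive part is infinite, so the integral is ⊤ and the bound is trivial
    have hpt : ∀ z, ENNReal.ofReal (c1 * dist (y t) z ^ 2)
        ≤ ERealPos (E z) + ENNReal.ofReal (|a| + c2 * dist y₀ z ^ 2) := by
      intro z
      calc ENNReal.ofReal (c1 * dist (y t) z ^ 2)
          ≤ ENNReal.ofReal (g z + (|a| + c2 * dist y₀ z ^ 2)) := by
            apply ENNReal.ofReal_le_ofReal
            have h4 : -a ≤ |a| := neg_le_abs a
            rw [hgdef]; simp only []; linarith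
        _ ≤ ENNReal.ofReal (g z) + ENNReal.ofReal (|a| + c2 * dist y₀ z ^ 2) :=
            ENNReal.ofReal_add_le
        _ ≤ ERealPos (E z) + ENNReal.ofReal (|a| + c2 * dist y₀ z ^ 2) := by
            gcongr
            rw [← ERealPos_coe]
            exact ERealPos_mono (key z)
    have hlhs : ∫⁻ z, ENNReal.ofReal (c1 * dist (y t) z ^ 2) ∂μ = ⊤ := by
      have : ∀ z, ENNReal.ofReal (c1 * dist (y t) z ^ 2)
          = ENNReal.ofReal c1 * edist (y t) z ^ 2 := by
        intro z
        rw [ENNReal.ofReal_mul hc1pos.le, hedist]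
      simp_rw [this]
      rw [lintegral_const_mul _ (hedist_meas (y t)), ← hLtdef, hLt,
        ENNReal.mul_top (by simp [ENNReal.ofReal_eq_zero, not_le, hc1pos])]
    have hrhs : ∫⁻ z, (ERealPos (E z) + ENNReal.ofReal (|a| + c2 * dist y₀ z ^ 2)) ∂μ
        = ∫⁻ z, ERealPos (E z) ∂μ + ∫⁻ z, ENNReal.ofReal (|a| + c2 * dist y₀ z ^ 2) ∂μ := by
      apply lintegral_add_right
      exact (measurable_const.add
        ((measurable_const.mul ((continuous_const.dist continuous_id).measurable.pow_const 2)))).ennreal_ofReal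
    have hPtop : ∫⁻ z, ERealPos (E z) ∂μ = ⊤ := by
      by_contra hP
      have := lintegral_mono (μ := μ) hpt
      rw [hlhs, hrhs] at this
      have hfin : ∫⁻ z, ERealPos (E z) ∂μ
          + ∫⁻ z, ENNReal.ofReal (|a| + c2 * dist y₀ z ^ 2) ∂μ < ⊤ := by
        apply ENNReal.add_lt_top.2
        refine ⟨lt_top_iff_ne_top.2 hP, ?_⟩
        rw [hneg_bound]
        exact ENNReal.add_lt_top.2 ⟨ENNReal.ofReal_lt_top,
          ENNReal.mul_lt_top ENNReal.ofReal_lt_top hL0.lt_top⟩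
      exact absurd this (by simp [hfin.ne])
    have hInt : ERealIntegral μ E = ⊤ := by
      rw [ERealIntegral, hPtop, EReal.coe_ennreal_top,
        ennreal_coe_eq_real_coe hNfin, EReal.top_sub_coe]
    rw [hInt, EReal.top_sub_coe, EReal.top_add_coe]
    exact le_top
  -- both moments finite : the honest estimate
  · have hint : ∀ x : X, (∫⁻ z, edist x z ^ 2 ∂μ) ≠ ⊤ →
        Integrable (fun z => dist x z ^ 2) μ := by
      intro x hx
      have h0 := integrable_toReal_of_lintegral_ne_top (hedist_meas x).aemeasurable hx
      apply h0.congr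
      filter_upwards with z
      rw [hedist, ENNReal.toReal_ofReal (by positivity)]
    have hintt : Integrable (fun z => dist (y t) z ^ 2) μ := hint _ hLt
    have hint0 : Integrable (fun z => dist y₀ z ^ 2) μ := hint _ hL0
    have hg_int : Integrable g μ := by
      apply Integrable.sub
      · exact (integrable_const a).add (hintt.const_mul c1)
      · exact hint0.const_mul c2
    -- integral of dist² equals toReal of lintegral
    have hitR : ∀ x : X, (∫⁻ z, edist x z ^ 2 ∂μ) ≠ ⊤ →
        ∫ z, dist x z ^ 2 ∂μ = (∫⁻ z, edist x z ^ 2 ∂μ).toReal := by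
      intro x hx
      rw [← integral_toReal (hedist_meas x).aemeasurable
        (Filter.Eventually.of_forall fun z => by rw [hedist]; exact ENNReal.ofReal_lt_top)]
      congr 1 with z
      rw [hedist, ENNReal.toReal_ofReal (by positivity)]
    have hgint : ∫ z, g z ∂μ = a + c1 * Lt.toReal - c2 * L0.toReal := by
      rw [hgdef]
      rw [integral_sub (f := fun z => a + c1 * dist (y t) z ^ 2)
          (g := fun z => c2 * dist y₀ z ^ 2)
          ((integrable_const a).add (hintt.const_mul c1)) (hint0.const_mul c2),
        integral_add (f := fun _ => a) (g := fun z => c1 * dist (y t) z ^ 2)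
          (integrable_const a) (hintt.const_mul c1),
        integral_const, integral_const_mul, integral_const_mul, probReal_univ]
      rw [hitR _ hLt, hitR _ hL0]
      simp
      rfl
    -- positive part of g is integrable
    have hP'fin : ∫⁻ z, ENNReal.ofReal (g z) ∂μ ≠ ⊤ := by
      apply ne_top_of_le_ne_top ?_ (lintegral_mono (g := fun z =>
        ENNReal.ofReal (|a| + c1 * dist (y t) z ^ 2)) ?_)
      · rw [show (fun z => ENNReal.ofReal (|a| + c1 * dist (y t) z ^ 2))
            = fun z => ENNReal.ofReal |a| + ENNReal.ofReal c1 * edist (y t) z ^ 2 by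
            funext z
            rw [ENNReal.ofReal_add (abs_nonneg a) (by positivity),
              ENNReal.ofReal_mul hc1pos.le, hedist], haff]
        exact (ENNReal.add_lt_top.2 ⟨ENNReal.ofReal_lt_top,
          ENNReal.mul_lt_top ENNReal.ofReal_lt_top hLt.lt_top⟩).ne
      · intro z
        apply ENNReal.ofReal_le_ofReal
        have h3 : 0 ≤ c2 * dist y₀ z ^ 2 := by positivity
        have h4 : a ≤ |a| := le_abs_self a
        rw [hgdef]; simp only []; linarith
    have hN'fin : ∫⁻ z, ENNReal.ofReal (-(g z)) ∂μ ≠ ⊤ := by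
      apply ne_top_of_le_ne_top ?_ (lintegral_mono (g := fun z =>
        ENNReal.ofReal (|a| + c2 * dist y₀ z ^ 2)) ?_)
      · rw [hneg_bound]
        exact (ENNReal.add_lt_top.2 ⟨ENNReal.ofReal_lt_top,
          ENNReal.mul_lt_top ENNReal.ofReal_lt_top hL0.lt_top⟩).ne
      · intro z
        apply ENNReal.ofReal_le_ofReal
        have h3 : 0 ≤ c1 * dist (y t) z ^ 2 := by positivity
        have h4 : -a ≤ |a| := neg_le_abs a
        rw [hgdef]; simp only []; linarith
    -- ∫ g as a difference of lintegrals
    have hgsplit : ∫ z, g z ∂μ = (∫⁻ z, ENNReal.ofReal (g z) ∂μ).toReal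
        - (∫⁻ z, ENNReal.ofReal (-(g z)) ∂μ).toReal := by
      rw [integral_eq_lintegral_pos_part_sub_lintegral_neg_part hg_int]
    -- ERealIntegral is at least ∫ g
    have hcomp : ((∫ z, g z ∂μ : ℝ) : EReal) ≤ ERealIntegral μ E := by
      rw [hgsplit, ERealIntegral]
      rw [EReal.coe_sub]
      apply EReal.sub_le_sub
      · rw [← ennreal_coe_eq_real_coe hP'fin]
        apply EReal.coe_ennreal_le_coe_ennreal_iff.2
        apply lintegral_mono
        intro z
        exact le_of_eq_of_le (ERealPos_coe (g z)).symm (ERealPos_mono (key z))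
      · rw [← ennreal_coe_eq_real_coe hN'fin]
        apply EReal.coe_ennreal_le_coe_ennreal_iff.2
        apply lintegral_mono
        intro z
        exact le_of_le_of_eq (ERealPos_mono (EReal.neg_le_neg_iff.2 (key z)))
          (by rw [← EReal.coe_neg, ERealPos_coe])
    -- final real computation
    have hDt : V ≤ Lt.toReal := by
      apply (ENNReal.toReal_le_toReal hVarne hLt).2
      exact iInf_le _ (y t)
    have hD0 : L0.toReal ≤ V + ε := by
      have := (ENNReal.toReal_le_toReal hL0 (ENNReal.add_lt_top.2
        ⟨hVar, ENNReal.ofReal_lt_top⟩).ne).2 hnear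
      rwa [ENNReal.toReal_add hVarne ENNReal.ofReal_ne_top,
        ENNReal.toReal_ofReal hε] at this
    have hreal : a ≤ ∫ z, g z ∂μ - K / 2 * V + ε / (2 * I) := by
      rw [hgint]
      have e1 : c1 * V ≤ c1 * Lt.toReal := by
        apply mul_le_mul_of_nonneg_left hDt hc1pos.le
      have e2 : c2 * L0.toReal ≤ c2 * V + c2 * ε := by
        calc c2 * L0.toReal ≤ c2 * (V + ε) := mul_le_mul_of_nonneg_left hD0 hc2pos.le
          _ = c2 * V + c2 * ε := by ring
      have e3 : ε / (2 * I) = c2 * ε := by rw [hc2def]; ring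
      have e4 : c1 * V - c2 * V = K / 2 * V := by rw [← sub_mul, hc12]
      linarith [e1, e2, e3, e4]
    -- put the EReal pieces together
    rw [ha]
    calc ((a : ℝ) : EReal)
        ≤ (((∫ z, g z ∂μ) - K / 2 * V + ε / (2 * I) : ℝ) : EReal) := EReal.coe_le_coe_iff.2 hreal
      _ = ((∫ z, g z ∂μ : ℝ) : EReal) - ((K / 2 * V : ℝ) : EReal) + ((ε / (2 * I) : ℝ) : EReal) := by
          norm_cast
      _ ≤ ERealIntegral μ E - ((K / 2 * V : ℝ) : EReal) + ((ε / (2 * I) : ℝ) : EReal) := by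
          apply add_le_add_left ?_ _
          exact EReal.sub_le_sub hcomp le_rfl
end

section
/- Let (X,d,m) be a metric measure space satisfying BCD(1,∞): for any finitely supported probability measure Ω on P₂(X) with barycenter μ̄, Ent_m(μ̄) ≤ ∫Ent_m dΩ − (1/2)Var(Ω). Let f₁,…,f_k be measurable functions with e^{fᵢ}/∫e^{fᵢ}dm ∈ P₂(X,d) and Σᵢ fᵢ(xᵢ) ≤ (1/2)·inf_{x∈X} Σᵢ d²(x,xᵢ) for all x₁,…,x_k ∈ X. Then ∏ᵢ ∫_X e^{fᵢ} dm ≤ 1 (functional Blaschke–Santaló type inequality). -/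
open MeasureTheory
open scoped ENNReal
open Classical

/-- Squared 2-Wasserstein distance (as an extended real number). -/
noncomputable def W2sq {X : Type*} [PseudoEMetricSpace X] [MeasurableSpace X]
    (μ ν : Measure X) : ℝ≥0∞ :=
  ⨅ π ∈ {π : Measure (X × X) | π.map Prod.fst = μ ∧ π.map Prod.snd = ν},
    ∫⁻ p, edist p.1 p.2 ^ 2 ∂π

/-- Relative entropy `Ent_m(ν) = ∫ ρ log ρ dm` for `ν = ρ·m`, `+∞` otherwise. -/
noncomputable def Ent {X : Type*} [MeasurableSpace X] (m ν : Measure X) : EReal :=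
  if ν ≪ m ∧ Integrable (fun x => Real.log (ν.rnDeriv m x).toReal) ν then
    ((∫ x, Real.log (ν.rnDeriv m x).toReal ∂ν : ℝ) : EReal)
  else ⊤


section Helpers
variable {α : Type*} [MeasurableSpace α] {μ : Measure α}

lemma lintegral_const_mul_le' (r : ℝ≥0∞) (hr : r ≠ ⊤) (f : α → ℝ≥0∞) :
    ∫⁻ a, r * f a ∂μ ≤ r * ∫⁻ a, f a ∂μ := by
  rcases eq_or_ne r 0 with h0 | h0
  · simp [h0]
  have h := lintegral_const_mul_le (μ := μ) r⁻¹ (fun a => r * f a)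
  have heq : ∀ a, r⁻¹ * (r * f a) = f a := fun a => by
    rw [← mul_assoc, ENNReal.inv_mul_cancel h0 hr, one_mul]
  simp only [heq] at h
  calc ∫⁻ a, r * f a ∂μ = r * (r⁻¹ * ∫⁻ a, r * f a ∂μ) := by
        rw [← mul_assoc, ENNReal.mul_inv_cancel h0 hr, one_mul]
    _ ≤ r * ∫⁻ a, f a ∂μ := mul_le_mul_right h r

lemma esq_add_le (a b : ℝ≥0∞) : (a + b) ^ 2 ≤ 4 * a ^ 2 + 4 * b ^ 2 := by
  have h1 : a + b ≤ 2 * max a b := by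
    rcases le_total a b with h | h
    · calc a + b ≤ b + b := by gcongr
      _ = 2 * b := (two_mul b).symm
      _ ≤ 2 * max a b := by gcongr; exact le_max_right a b
    · calc a + b ≤ a + a := by gcongr
      _ = 2 * a := (two_mul a).symm
      _ ≤ 2 * max a b := by gcongr; exact le_max_left a b
  calc (a + b) ^ 2 ≤ (2 * max a b) ^ 2 := by gcongr
    _ = 4 * (max a b) ^ 2 := by ring
    _ ≤ 4 * (a ^ 2 + b ^ 2) := by
        gcongr
        rcases le_total a b with h | h
        · rw [max_eq_right h]; exact le_add_self
        · rw [max_eq_left h]; exact le_self_add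
    _ = 4 * a ^ 2 + 4 * b ^ 2 := by ring

end Helpers

lemma ent_nonneg {X : Type*} [MeasurableSpace X] (m ν' : Measure X)
    [IsProbabilityMeasure m] [IsProbabilityMeasure ν'] : (0 : EReal) ≤ Ent m ν' := by
  unfold Ent
  split_ifs with h
  · obtain ⟨hac, hint⟩ := h
    set r : X → ℝ≥0∞ := ν'.rnDeriv m with hr
    have hpos : ∀ᵐ x ∂ν', 0 < r x := Measure.rnDeriv_pos hac
    have hlt : ∀ᵐ x ∂ν', r x < ⊤ := hac.ae_le (Measure.rnDeriv_lt_top ν' m)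
    set g : X → ℝ := fun x => ((r x)⁻¹).toReal with hg
    have hwd : m.withDensity r = ν' := Measure.withDensity_rnDeriv_eq ν' m hac
    have hgint : Integrable g ν' := by
      have hmeas : Measurable g := (Measure.measurable_rnDeriv ν' m).inv.ennreal_toReal
      refine ⟨hmeas.aestronglyMeasurable, ?_⟩
      rw [hasFiniteIntegral_iff_ofReal (Filter.Eventually.of_forall fun x => ENNReal.toReal_nonneg)]
      have h1 : ∫⁻ x, ENNReal.ofReal (g x) ∂ν' ≤ ∫⁻ x, (r x)⁻¹ ∂ν' :=
        lintegral_mono fun x => ENNReal.ofReal_toReal_le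
      have h2 : ∫⁻ x, (r x)⁻¹ ∂ν' = ∫⁻ x, r x * (r x)⁻¹ ∂m := by
        rw [← hwd]; exact lintegral_withDensity_eq_lintegral_mul _ (Measure.measurable_rnDeriv ν' m)
          (Measure.measurable_rnDeriv ν' m).inv
      have h3 : ∫⁻ x, r x * (r x)⁻¹ ∂m ≤ 1 := by
        calc ∫⁻ x, r x * (r x)⁻¹ ∂m ≤ ∫⁻ _, 1 ∂m := lintegral_mono fun x => ENNReal.mul_inv_le_one _
        _ = 1 := by simp
      exact lt_of_le_of_lt (h1.trans (h2 ▸ h3)) ENNReal.one_lt_top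
    have hmono : ∀ᵐ x ∂ν', -(Real.log (r x).toReal) ≤ g x - 1 := by
      filter_upwards [hpos, hlt] with x hx hx'
      have ht : 0 < (r x).toReal := ENNReal.toReal_pos hx.ne' hx'.ne
      have : Real.log (r x).toReal⁻¹ ≤ (r x).toReal⁻¹ - 1 :=
        Real.log_le_sub_one_of_pos (by positivity)
      rw [Real.log_inv] at this
      have hginv : g x = (r x).toReal⁻¹ := by
        rw [hg]; simp [ENNReal.toReal_inv]
      linarith [hginv ▸ this]
    have hint2 : ∫ x, -(Real.log (r x).toReal) ∂ν' ≤ ∫ x, (g x - 1) ∂ν' :=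
      integral_mono_ae hint.neg (hgint.sub (integrable_const 1)) hmono
    have hgle : ∫ x, g x ∂ν' ≤ 1 := by
      rw [integral_eq_lintegral_of_nonneg_ae (Filter.Eventually.of_forall fun x => ENNReal.toReal_nonneg)
        hgint.aestronglyMeasurable]
      have h1 : ∫⁻ x, ENNReal.ofReal (g x) ∂ν' ≤ 1 := by
        calc ∫⁻ x, ENNReal.ofReal (g x) ∂ν' ≤ ∫⁻ x, (r x)⁻¹ ∂ν' :=
              lintegral_mono fun x => ENNReal.ofReal_toReal_le
        _ = ∫⁻ x, r x * (r x)⁻¹ ∂m := by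
            rw [← hwd]; exact lintegral_withDensity_eq_lintegral_mul _ (Measure.measurable_rnDeriv ν' m)
              (Measure.measurable_rnDeriv ν' m).inv
        _ ≤ ∫⁻ _, 1 ∂m := lintegral_mono fun x => ENNReal.mul_inv_le_one _
        _ = 1 := by simp
      calc (∫⁻ x, ENNReal.ofReal (g x) ∂ν').toReal ≤ (1 : ℝ≥0∞).toReal :=
            ENNReal.toReal_mono ENNReal.one_ne_top h1
      _ = 1 := by simp
    have : 0 ≤ ∫ x, Real.log (r x).toReal ∂ν' := by
      have := hint2
      rw [integral_neg, integral_sub hgint (integrable_const 1), integral_const] at this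
      simp only [probReal_univ, ENNReal.toReal_one, smul_eq_mul, one_mul] at this
      linarith
    exact_mod_cast EReal.coe_nonneg.mpr this
  · exact le_top

lemma exp_mul_neg_le (t : ℝ) : Real.exp t * max (-t) 0 ≤ Real.exp (-1) := by
  rcases le_total 0 t with h | h
  · rw [max_eq_right (by linarith)]
    simp [Real.exp_pos]
    positivity
  · rw [max_eq_left (by linarith)]
    have h1 : -t ≤ Real.exp (-t - 1) := by
      have := Real.add_one_le_exp (-t - 1)
      linarith
    calc Real.exp t * -t ≤ Real.exp t * Real.exp (-t - 1) :=
          mul_le_mul_of_nonneg_left h1 (Real.exp_pos t).le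
    _ = Real.exp (-1) := by rw [← Real.exp_add]; ring_nf

lemma ent_formula {X : Type*} [MetricSpace X] [MeasurableSpace X] [BorelSpace X]
    (m : Measure X) [IsProbabilityMeasure m] (g : X → ℝ) (hg : Measurable g)
    (hZ0 : (∫⁻ x, ENNReal.ofReal (Real.exp (g x)) ∂m) ≠ 0)
    (hZt : (∫⁻ x, ENNReal.ofReal (Real.exp (g x)) ∂m) ≠ ⊤)
    (x₀ : X) (C : ℝ) (hub : ∀ x, g x ≤ C + dist x₀ x ^ 2 / 2)
    (hm2 : ∫⁻ z, edist x₀ z ^ 2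
        ∂((∫⁻ x, ENNReal.ofReal (Real.exp (g x)) ∂m)⁻¹ •
          m.withDensity (fun x => ENNReal.ofReal (Real.exp (g x)))) < ⊤) :
    IsProbabilityMeasure ((∫⁻ x, ENNReal.ofReal (Real.exp (g x)) ∂m)⁻¹ •
        m.withDensity (fun x => ENNReal.ofReal (Real.exp (g x)))) ∧
    Integrable g ((∫⁻ x, ENNReal.ofReal (Real.exp (g x)) ∂m)⁻¹ •
        m.withDensity (fun x => ENNReal.ofReal (Real.exp (g x)))) ∧
    Ent m ((∫⁻ x, ENNReal.ofReal (Real.exp (g x)) ∂m)⁻¹ •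
        m.withDensity (fun x => ENNReal.ofReal (Real.exp (g x)))) =
      ((∫ x, g x ∂((∫⁻ x, ENNReal.ofReal (Real.exp (g x)) ∂m)⁻¹ •
        m.withDensity (fun x => ENNReal.ofReal (Real.exp (g x)))) -
        Real.log (∫⁻ x, ENNReal.ofReal (Real.exp (g x)) ∂m).toReal : ℝ) : EReal) := by
  set ϱ : X → ℝ≥0∞ := fun x => ENNReal.ofReal (Real.exp (g x)) with hϱ
  set Z : ℝ≥0∞ := ∫⁻ x, ϱ x ∂m with hZ
  set ν : Measure X := Z⁻¹ • m.withDensity ϱ with hν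
  have hϱmeas : Measurable ϱ := (Real.continuous_exp.measurable.comp hg).ennreal_ofReal
  have hinv0 : Z⁻¹ ≠ 0 := ENNReal.inv_ne_zero.mpr hZt
  have hinvt : Z⁻¹ ≠ ⊤ := ENNReal.inv_ne_top.mpr hZ0
  have hν2 : ν = m.withDensity (fun x => Z⁻¹ * ϱ x) := by
    rw [hν, ← withDensity_smul Z⁻¹ hϱmeas]
    rfl
  have hprob : IsProbabilityMeasure ν := by
    constructor
    rw [hν, Measure.smul_apply, smul_eq_mul, withDensity_apply _ MeasurableSet.univ,
      setLIntegral_univ, ← hZ, ENNReal.inv_mul_cancel hZ0 hZt]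
  haveI := hprob
  have hedist : ∀ x : X, ENNReal.ofReal (dist x₀ x ^ 2) = edist x₀ x ^ 2 := fun x => by
    rw [edist_dist, ENNReal.ofReal_pow dist_nonneg]
  -- integrability of g wrt ν
  have hint : Integrable g ν := by
    refine ⟨hg.aestronglyMeasurable, ?_⟩
    rw [hasFiniteIntegral_iff_norm]
    have hb : ∀ x, ENNReal.ofReal ‖g x‖ ≤
        ENNReal.ofReal (max (g x) 0) + ENNReal.ofReal (max (-g x) 0) := by
      intro x
      rw [← ENNReal.ofReal_add (le_max_right _ _) (le_max_right _ _)]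
      apply ENNReal.ofReal_le_ofReal
      rw [Real.norm_eq_abs]
      rcases le_total 0 (g x) with h | h
      · rw [abs_of_nonneg h]
        have := le_max_left (g x) 0
        have := le_max_right (-g x) 0
        linarith
      · rw [abs_of_nonpos h]
        have := le_max_left (-g x) 0
        have := le_max_right (g x) 0
        linarith
    calc ∫⁻ x, ENNReal.ofReal ‖g x‖ ∂ν
        ≤ ∫⁻ x, (ENNReal.ofReal (max (g x) 0) + ENNReal.ofReal (max (-g x) 0)) ∂ν :=
          lintegral_mono hb
    _ = (∫⁻ x, ENNReal.ofReal (max (g x) 0) ∂ν) + ∫⁻ x, ENNReal.ofReal (max (-g x) 0) ∂ν :=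
          lintegral_add_left (by fun_prop) _
    _ < ⊤ := by
        refine ENNReal.add_lt_top.mpr ⟨?_, ?_⟩
        · -- positive part
          have hb1 : ∀ x, ENNReal.ofReal (max (g x) 0) ≤
              ENNReal.ofReal (max C 0) + edist x₀ x ^ 2 := by
            intro x
            rw [← hedist x, ← ENNReal.ofReal_add (le_max_right _ _) (sq_nonneg _)]
            apply ENNReal.ofReal_le_ofReal
            have h1 := hub x
            have h2 : dist x₀ x ^ 2 / 2 ≤ dist x₀ x ^ 2 := half_le_self (sq_nonneg _)
            have := le_max_left C 0
            have := sq_nonneg (dist x₀ x)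
            rcases le_total 0 (g x) with h | h
            · rw [max_eq_left h]; linarith
            · rw [max_eq_right h]; positivity
          calc ∫⁻ x, ENNReal.ofReal (max (g x) 0) ∂ν
              ≤ ∫⁻ x, (ENNReal.ofReal (max C 0) + edist x₀ x ^ 2) ∂ν := lintegral_mono hb1
          _ = ENNReal.ofReal (max C 0) * ν Set.univ + ∫⁻ x, edist x₀ x ^ 2 ∂ν := by
              rw [lintegral_add_left measurable_const, lintegral_const]
          _ < ⊤ := by
              rw [measure_univ, mul_one]
              exact ENNReal.add_lt_top.mpr ⟨ENNReal.ofReal_lt_top, hm2⟩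
        · -- negative part
          have heq : ∫⁻ x, ENNReal.ofReal (max (-g x) 0) ∂ν
              = Z⁻¹ * ∫⁻ x, ϱ x * ENNReal.ofReal (max (-g x) 0) ∂m := by
            rw [hν, lintegral_smul_measure,
              lintegral_withDensity_eq_lintegral_mul m hϱmeas (by fun_prop)]
            rfl
          rw [heq]
          have hpt : ∀ x, ϱ x * ENNReal.ofReal (max (-g x) 0) ≤ ENNReal.ofReal (Real.exp (-1)) := by
            intro x
            rw [hϱ, ← ENNReal.ofReal_mul (Real.exp_nonneg _)]
            exact ENNReal.ofReal_le_ofReal (exp_mul_neg_le (g x))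
          calc Z⁻¹ * ∫⁻ x, ϱ x * ENNReal.ofReal (max (-g x) 0) ∂m
              ≤ Z⁻¹ * ∫⁻ _, ENNReal.ofReal (Real.exp (-1)) ∂m :=
                mul_le_mul_right (lintegral_mono hpt) _
          _ = Z⁻¹ * ENNReal.ofReal (Real.exp (-1)) := by rw [lintegral_const, measure_univ, mul_one]
          _ < ⊤ := ENNReal.mul_lt_top hinvt.lt_top ENNReal.ofReal_lt_top
  -- entropy formula
  refine ⟨hprob, hint, ?_⟩
  have hac : ν ≪ m := by
    rw [hν2]; exact withDensity_absolutelyContinuous m _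
  have hrn : ν.rnDeriv m =ᵐ[m] fun x => Z⁻¹ * ϱ x := by
    rw [hν2]
    exact Measure.rnDeriv_withDensity m (hϱmeas.const_mul _)
  have hrnν : ν.rnDeriv m =ᵐ[ν] fun x => Z⁻¹ * ϱ x := hac.ae_le hrn
  have hlogeq : (fun x => Real.log (ν.rnDeriv m x).toReal)
      =ᵐ[ν] fun x => Real.log Z⁻¹.toReal + g x := by
    filter_upwards [hrnν] with x hx
    rw [hx, ENNReal.toReal_mul, ENNReal.toReal_ofReal (Real.exp_nonneg _),
      Real.log_mul (by
        have : 0 < Z⁻¹.toReal := ENNReal.toReal_pos hinv0 hinvt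
        exact this.ne') (Real.exp_ne_zero _), Real.log_exp]
  have hint2 : Integrable (fun x => Real.log (ν.rnDeriv m x).toReal) ν := by
    rw [integrable_congr hlogeq]
    exact (integrable_const _).add hint
  unfold Ent
  rw [if_pos ⟨hac, hint2⟩]
  congr 1
  rw [integral_congr_ae hlogeq, integral_add (integrable_const _) hint, integral_const,
    probReal_univ]
  simp only [ENNReal.toReal_one, one_smul, smul_eq_mul, one_mul]
  rw [ENNReal.toReal_inv, Real.log_inv]
  ring

lemma W2sq_le_cost {X : Type*} [PseudoEMetricSpace X] [MeasurableSpace X]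
    {μ ν : Measure X} (π : Measure (X × X)) (h1 : π.map Prod.fst = μ)
    (h2 : π.map Prod.snd = ν) :
    W2sq μ ν ≤ ∫⁻ p, edist p.1 p.2 ^ 2 ∂π := iInf₂_le π ⟨h1, h2⟩

lemma exists_coupling {X : Type*} [PseudoEMetricSpace X] [MeasurableSpace X]
    {μ ν : Measure X} {c : ℝ≥0∞} (hc : W2sq μ ν < c) :
    ∃ π : Measure (X × X), π.map Prod.fst = μ ∧ π.map Prod.snd = ν ∧
      ∫⁻ p, edist p.1 p.2 ^ 2 ∂π < c := by
  by_contra hcon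
  push_neg at hcon
  exact absurd hc (not_lt.mpr (le_iInf₂ fun π hπ => hcon π hπ.1 hπ.2))

lemma W2sq_lt_top {X : Type*} [MetricSpace X] [MeasurableSpace X] [BorelSpace X]
    (μ ρ : Measure X) [IsProbabilityMeasure μ] [IsProbabilityMeasure ρ] (a b : X)
    (hμ : ∫⁻ z, edist a z ^ 2 ∂μ < ⊤) (hρ : ∫⁻ z, edist b z ^ 2 ∂ρ < ⊤) :
    W2sq μ ρ < ⊤ := by
  have hma : Measurable (fun x : X => edist a x) := (continuous_const.edist continuous_id).measurable
  have hmb : Measurable (fun x : X => edist b x) := (continuous_const.edist continuous_id).measurable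
  have h1 : (μ.prod ρ).map Prod.fst = μ := by
    rw [Measure.map_fst_prod, measure_univ, one_smul]
  have h2 : (μ.prod ρ).map Prod.snd = ρ := by
    rw [Measure.map_snd_prod, measure_univ, one_smul]
  have hpt : ∀ z : X × X, edist z.1 z.2 ^ 2 ≤
      4 * edist a z.1 ^ 2 + (16 * edist a b ^ 2 + 16 * edist b z.2 ^ 2) := by
    intro z
    have ht : edist z.1 z.2 ≤ edist a z.1 + (edist a b + edist b z.2) := by
      calc edist z.1 z.2 ≤ edist z.1 a + edist a z.2 := edist_triangle _ _ _
      _ ≤ edist z.1 a + (edist a b + edist b z.2) := by gcongr; exact edist_triangle _ _ _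
      _ = edist a z.1 + (edist a b + edist b z.2) := by rw [edist_comm]
    calc edist z.1 z.2 ^ 2 ≤ (edist a z.1 + (edist a b + edist b z.2)) ^ 2 := by gcongr
    _ ≤ 4 * edist a z.1 ^ 2 + 4 * (edist a b + edist b z.2) ^ 2 := esq_add_le _ _
    _ ≤ 4 * edist a z.1 ^ 2 + 4 * (4 * edist a b ^ 2 + 4 * edist b z.2 ^ 2) := by
        gcongr; exact esq_add_le _ _
    _ = 4 * edist a z.1 ^ 2 + (16 * edist a b ^ 2 + 16 * edist b z.2 ^ 2) := by ring
  have key : ∫⁻ z : X × X, edist z.1 z.2 ^ 2 ∂(μ.prod ρ) < ⊤ := by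
    calc ∫⁻ z : X × X, edist z.1 z.2 ^ 2 ∂(μ.prod ρ)
        ≤ ∫⁻ z : X × X, (4 * edist a z.1 ^ 2 + (16 * edist a b ^ 2 + 16 * edist b z.2 ^ 2))
            ∂(μ.prod ρ) := lintegral_mono hpt
    _ = (∫⁻ z : X × X, 4 * edist a z.1 ^ 2 ∂(μ.prod ρ)) +
        ((∫⁻ _ : X × X, 16 * edist a b ^ 2 ∂(μ.prod ρ)) +
         (∫⁻ z : X × X, 16 * edist b z.2 ^ 2 ∂(μ.prod ρ))) := by
        rw [lintegral_add_left (by fun_prop : Measurable fun z : X × X => 4 * edist a z.1 ^ 2),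
          lintegral_add_left (measurable_const : Measurable fun _ : X × X => 16 * edist a b ^ 2)]
    _ < ⊤ := by
        have e1 : ∫⁻ z : X × X, 4 * edist a z.1 ^ 2 ∂(μ.prod ρ) = 4 * ∫⁻ x, edist a x ^ 2 ∂μ := by
          rw [lintegral_const_mul _ (by fun_prop : Measurable fun z : X × X => edist a z.1 ^ 2)]
          congr 1
          have := lintegral_map (μ := μ.prod ρ)
            (by fun_prop : Measurable fun x : X => edist a x ^ 2) measurable_fst
          rw [h1] at this
          exact this.symm
        have e2 : ∫⁻ z : X × X, 16 * edist b z.2 ^ 2 ∂(μ.prod ρ) = 16 * ∫⁻ x, edist b x ^ 2 ∂ρ := by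
          rw [lintegral_const_mul _ (by fun_prop : Measurable fun z : X × X => edist b z.2 ^ 2)]
          congr 1
          have := lintegral_map (μ := μ.prod ρ)
            (by fun_prop : Measurable fun x : X => edist b x ^ 2) measurable_snd
          rw [h2] at this
          exact this.symm
        rw [e1, e2, lintegral_const]
        have hab : edist a b < ⊤ := edist_lt_top a b
        refine ENNReal.add_lt_top.mpr ⟨ENNReal.mul_lt_top (by norm_num) hμ,
          ENNReal.add_lt_top.mpr ⟨?_, ENNReal.mul_lt_top (by norm_num) hρ⟩⟩
        have h1' : (μ.prod ρ) Set.univ = 1 := measure_univ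
        rw [h1', mul_one]
        exact ENNReal.mul_lt_top (by norm_num) (ENNReal.pow_lt_top hab)
  exact lt_of_le_of_lt (W2sq_le_cost _ h1 h2) key

section Duality
variable {X : Type*} [MetricSpace X] [MeasurableSpace X] [BorelSpace X]

set_option maxHeartbeats 1000000 in
lemma duality (k : ℕ) (f : Fin k → X → ℝ) (hf : ∀ i, Measurable (f i))
    (hdual : ∀ p : Fin k → X, ∀ y : X, ∑ i, f i (p i) ≤ 1 / 2 * ∑ i, dist y (p i) ^ 2)
    (ν : Fin k → Measure X) (hprob : ∀ i, IsProbabilityMeasure (ν i))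
    (x₀ : Fin k → X) (i0 : Fin k)
    (hmomf : ∀ i, ∫⁻ z, edist (x₀ i) z ^ 2 ∂(ν i) < ⊤)
    (hint : ∀ i, Integrable (f i) (ν i))
    (νbar : Measure X) [IsProbabilityMeasure νbar]
    (hW : ∀ i, W2sq (ν i) νbar < ⊤) :
    ∑ i, ∫ x, f i x ∂(ν i) ≤ (1 / 2) * ∑ i, (W2sq (ν i) νbar).toReal := by
  haveI := fun i => hprob i
  have hk : 0 < k := i0.pos
  have hX : Nonempty X := ⟨x₀ i0⟩
  -- the key consequence of duality with all but one point at y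
  have hkey1 : ∀ (i : Fin k) (p y : X),
      f i p - dist y p ^ 2 / 2 ≤ f i y - ∑ j, f j y := by
    intro i p y
    have h := hdual (fun j => if j = i then p else y) y
    have hL : ∑ j, f j (if j = i then p else y) = (f i p - f i y) + ∑ j, f j y := by
      have : ∀ j : Fin k, f j (if j = i then p else y)
          = (if j = i then f i p - f i y else 0) + f j y := by
        intro j
        by_cases hj : j = i
        · subst hj; simp
        · simp [hj]
      rw [Finset.sum_congr rfl fun j _ => this j, Finset.sum_add_distrib,
        Finset.sum_ite_eq' Finset.univ i (fun _ => f i p - f i y)]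
      simp
    have hR : ∑ j, dist y (if j = i then p else y) ^ 2 = dist y p ^ 2 := by
      have : ∀ j : Fin k, dist y (if j = i then p else y) ^ 2
          = if j = i then dist y p ^ 2 else 0 := by
        intro j
        by_cases hj : j = i <;> simp [hj]
      rw [Finset.sum_congr rfl fun j _ => this j,
        Finset.sum_ite_eq' Finset.univ i (fun _ => dist y p ^ 2)]
      simp
    rw [hL, hR] at h
    linarith
  -- the sup function G
  set G : Fin k → X → ℝ := fun i y => ⨆ p : X, (f i p - dist y p ^ 2 / 2) with hG
  have hBdd : ∀ i y, BddAbove (Set.range fun p => f i p - dist y p ^ 2 / 2) := by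
    intro i y
    exact ⟨f i y - ∑ j, f j y, by rintro _ ⟨p, rfl⟩; exact hkey1 i p y⟩
  have hleG : ∀ (i : Fin k) (y p : X), f i p - dist y p ^ 2 / 2 ≤ G i y := by
    intro i y p
    exact le_ciSup (hBdd i y) p
  have hGsum : ∀ y, ∑ i, G i y ≤ 0 := by
    intro y
    refine le_of_forall_pos_le_add fun ε hε => ?_
    have hchoice : ∀ i : Fin k, ∃ p, G i y - ε / k < f i p - dist y p ^ 2 / 2 := by
      intro i
      have hεk : 0 < ε / k := by positivity
      exact exists_lt_of_lt_ciSup (by linarith : G i y - ε / k < G i y)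
    choose p hp using hchoice
    have hsum : ∑ i, (G i y - ε / k) ≤ ∑ i, (f i (p i) - dist y (p i) ^ 2 / 2) :=
      Finset.sum_le_sum fun i _ => (hp i).le
    have hdd := hdual p y
    have h1 : ∑ i, (G i y - ε / k) = (∑ i, G i y) - ε := by
      rw [Finset.sum_sub_distrib, Finset.sum_const, Finset.card_univ, Fintype.card_fin]
      have : (k : ℝ) * (ε / k) = ε := by
        field_simp
      rw [nsmul_eq_mul, this]
    have h2 : ∑ i, (f i (p i) - dist y (p i) ^ 2 / 2)
        = ∑ i, f i (p i) - 1 / 2 * ∑ i, dist y (p i) ^ 2 := by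
      rw [Finset.sum_sub_distrib, Finset.mul_sum]
      congr 1
      exact Finset.sum_congr rfl fun i _ => by ring
    rw [h1, h2] at hsum
    linarith
  have hGmeas : ∀ i, Measurable (G i) := by
    intro i
    apply LowerSemicontinuous.measurable
    intro y t ht
    obtain ⟨p, hp⟩ := exists_lt_of_lt_ciSup ht
    have hcont : Continuous fun y' : X => f i p - dist y' p ^ 2 / 2 := by
      have : Continuous fun y' : X => dist y' p := continuous_id.dist continuous_const
      continuity
    have hopen : IsOpen {y' : X | t < f i p - dist y' p ^ 2 / 2} :=
      isOpen_lt continuous_const hcont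
    filter_upwards [hopen.mem_nhds hp] with y' hy'
    exact lt_of_lt_of_le hy' (hleG i y' p)
  -- reduce to an epsilon-approximation
  refine le_of_forall_pos_le_add fun δ hδ => ?_
  set δ' : ℝ := δ / (k + 1) with hδ'def
  have hδ' : 0 < δ' := by positivity
  -- choose M (a natural number) such that the tail terms are small
  have htail : ∀ i : Fin k, Filter.Tendsto (fun M : ℕ => ∫ x, max (f i x - M) 0 ∂ν i)
      Filter.atTop (nhds 0) := by
    intro i
    have key := tendsto_integral_of_dominated_convergence
      (F := fun (n : ℕ) (x : X) => max (f i x - n) 0) (f := fun _ => (0 : ℝ))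
      (μ := ν i) (bound := fun x => |f i x|)
      (fun n => (((hf i).sub measurable_const).max measurable_const).aestronglyMeasurable)
      ((hint i).abs)
      ?_ ?_
    · simpa using key
    · intro n
      filter_upwards with x
      rw [Real.norm_eq_abs, abs_of_nonneg (le_max_right _ _)]
      rcases le_total (f i x) 0 with h | h
      · rw [max_eq_right (by linarith [Nat.cast_nonneg (α := ℝ) n] : f i x - (n:ℝ) ≤ 0)]
        positivity
      · have h1 : f i x - (n:ℝ) ≤ |f i x| := by
          rw [abs_of_nonneg h]
          linarith [Nat.cast_nonneg (α := ℝ) n]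
        exact max_le h1 (abs_nonneg _)
    · filter_upwards with x
      obtain ⟨n₀, hn₀⟩ := exists_nat_ge (f i x)
      apply Filter.Tendsto.congr' (f₁ := fun _ : ℕ => (0:ℝ))
      · filter_upwards [Filter.eventually_ge_atTop n₀] with n hn
        rw [max_eq_right ?_]
        have : (n₀ : ℝ) ≤ (n : ℝ) := by exact_mod_cast hn
        linarith
      · exact tendsto_const_nhds
  have hEtend : Filter.Tendsto (fun M : ℕ => ∑ i, ∫ x, max (f i x - M) 0 ∂ν i)
      Filter.atTop (nhds 0) := by
    have := tendsto_finset_sum (Finset.univ : Finset (Fin k)) (fun i _ => htail i)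
    simpa using this
  obtain ⟨M, hM⟩ : ∃ M : ℕ, ∑ i, ∫ x, max (f i x - M) 0 ∂ν i < δ / 2 :=
    (hEtend.eventually (gt_mem_nhds (by positivity : (0:ℝ) < δ / 2))).exists
  -- choose near-optimal couplings
  have hcoup : ∀ i, ∃ π : Measure (X × X), π.map Prod.fst = ν i ∧ π.map Prod.snd = νbar ∧
      ∫⁻ z, edist z.1 z.2 ^ 2 ∂π < W2sq (ν i) νbar + ENNReal.ofReal δ' := by
    intro i
    apply exists_coupling
    exact ENNReal.lt_add_right (hW i).ne (by simp [ENNReal.ofReal_pos, hδ'])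
  choose π hπ1 hπ2 hπcost using hcoup
  have hπprob : ∀ i, IsProbabilityMeasure (π i) := by
    intro i
    constructor
    have h := congrArg (fun μ : Measure X => μ Set.univ) (hπ1 i)
    simp only [Measure.map_apply measurable_fst MeasurableSet.univ, Set.preimage_univ] at h
    rw [h, measure_univ]
  -- second moment of νbar
  have hbar2 : ∫⁻ y, edist (x₀ i0) y ^ 2 ∂νbar < ⊤ := by
    have hpt : ∀ z : X × X, edist (x₀ i0) z.2 ^ 2
        ≤ 4 * edist (x₀ i0) z.1 ^ 2 + 4 * edist z.1 z.2 ^ 2 := by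
      intro z
      calc edist (x₀ i0) z.2 ^ 2 ≤ (edist (x₀ i0) z.1 + edist z.1 z.2) ^ 2 := by
            gcongr; exact edist_triangle _ _ _
      _ ≤ 4 * edist (x₀ i0) z.1 ^ 2 + 4 * edist z.1 z.2 ^ 2 := esq_add_le _ _
    have hmap : ∫⁻ y, edist (x₀ i0) y ^ 2 ∂νbar = ∫⁻ z, edist (x₀ i0) z.2 ^ 2 ∂π i0 := by
      have := lintegral_map (μ := π i0)
        (by fun_prop : Measurable fun y : X => edist (x₀ i0) y ^ 2) measurable_snd
      rw [hπ2 i0] at this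
      exact this
    rw [hmap]
    calc ∫⁻ z, edist (x₀ i0) z.2 ^ 2 ∂π i0
        ≤ ∫⁻ z, (4 * edist (x₀ i0) z.1 ^ 2 + 4 * edist z.1 z.2 ^ 2) ∂π i0 :=
          lintegral_mono hpt
    _ = (∫⁻ z, 4 * edist (x₀ i0) z.1 ^ 2 ∂π i0) + ∫⁻ z, 4 * edist z.1 z.2 ^ 2 ∂π i0 :=
          lintegral_add_left (by fun_prop) _
    _ ≤ 4 * (∫⁻ z, edist (x₀ i0) z.1 ^ 2 ∂π i0) + 4 * ∫⁻ z, edist z.1 z.2 ^ 2 ∂π i0 := by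
          gcongr
          · exact le_of_eq (lintegral_const_mul _ (by fun_prop))
          · exact lintegral_const_mul_le' 4 (by norm_num) _
    _ < ⊤ := by
          have h1 : ∫⁻ z, edist (x₀ i0) z.1 ^ 2 ∂π i0 = ∫⁻ x, edist (x₀ i0) x ^ 2 ∂ν i0 := by
            have := lintegral_map (μ := π i0)
              (by fun_prop : Measurable fun y : X => edist (x₀ i0) y ^ 2) measurable_fst
            rw [hπ1 i0] at this
            exact this.symm
          rw [h1]
          refine ENNReal.add_lt_top.mpr ⟨ENNReal.mul_lt_top (by norm_num) (hmomf i0), ?_⟩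
          refine ENNReal.mul_lt_top (by norm_num) ?_
          exact (hπcost i0).trans (ENNReal.add_lt_top.mpr ⟨hW i0, ENNReal.ofReal_lt_top⟩)
  -- integrability of the distance square wrt νbar
  have hd2bar : Integrable (fun y => dist (x₀ i0) y ^ 2) νbar := by
    refine ⟨(by fun_prop : Measurable fun y : X => dist (x₀ i0) y ^ 2).aestronglyMeasurable, ?_⟩
    rw [hasFiniteIntegral_iff_ofReal (Filter.Eventually.of_forall fun y => by positivity)]
    have : ∀ y : X, ENNReal.ofReal (dist (x₀ i0) y ^ 2) = edist (x₀ i0) y ^ 2 := fun y => by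
      rw [edist_dist, ENNReal.ofReal_pow dist_nonneg]
    simpa only [this] using hbar2
  -- integrability of the truncated sup functions wrt νbar
  have hminGint : ∀ i : Fin k, Integrable (fun y => min (G i y) (M : ℝ)) νbar := by
    intro i
    refine Integrable.mono'
      (g := fun y => |(M:ℝ)| + |f i (x₀ i)| + dist (x₀ i0) y ^ 2 + dist (x₀ i0) (x₀ i) ^ 2)
      (((((integrable_const _).add (integrable_const _)).add hd2bar).add (integrable_const _)))
      (((hGmeas i).min measurable_const).aestronglyMeasurable) ?_
    filter_upwards with y
    rw [Real.norm_eq_abs]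
    have h1 : f i (x₀ i) - dist y (x₀ i) ^ 2 / 2 ≤ G i y := hleG i y (x₀ i)
    have h2 : dist y (x₀ i) ^ 2 ≤ 2 * dist (x₀ i0) y ^ 2 + 2 * dist (x₀ i0) (x₀ i) ^ 2 := by
      have ht : dist y (x₀ i) ≤ dist (x₀ i0) y + dist (x₀ i0) (x₀ i) := by
        rw [dist_comm (x₀ i0) y]
        exact dist_triangle _ _ _
      have hsq : dist y (x₀ i) ^ 2 ≤ (dist (x₀ i0) y + dist (x₀ i0) (x₀ i)) ^ 2 :=
        pow_le_pow_left₀ dist_nonneg ht 2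
      nlinarith [hsq, sq_nonneg (dist (x₀ i0) y - dist (x₀ i0) (x₀ i))]
    rw [abs_le]
    constructor
    · have hl : -(|f i (x₀ i)| + dist (x₀ i0) y ^ 2 + dist (x₀ i0) (x₀ i) ^ 2) ≤ G i y := by
        have := neg_abs_le (f i (x₀ i))
        linarith
      have hM' : -(|(M:ℝ)|) ≤ (M:ℝ) := neg_abs_le _
      rcases le_total (G i y) (M:ℝ) with h | h
      · rw [min_eq_left h]; linarith [abs_nonneg (M:ℝ)]
      · rw [min_eq_right h]
        have h4 : (0:ℝ) ≤ dist (x₀ i0) y ^ 2 := sq_nonneg _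
        have h5 : (0:ℝ) ≤ dist (x₀ i0) (x₀ i) ^ 2 := sq_nonneg _
        have h6 : (0:ℝ) ≤ |f i (x₀ i)| := abs_nonneg _
        linarith
    · have := min_le_right (G i y) (M:ℝ)
      have h4 : (0:ℝ) ≤ dist (x₀ i0) y ^ 2 := sq_nonneg _
      have h5 : (0:ℝ) ≤ dist (x₀ i0) (x₀ i) ^ 2 := sq_nonneg _
      have h6 : (0:ℝ) ≤ |f i (x₀ i)| := abs_nonneg _
      linarith [le_abs_self (M:ℝ)]
  -- the per-index estimate
  have hperi : ∀ i : Fin k, ∫ x, f i x ∂ν i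
      ≤ (∫ y, min (G i y) (M:ℝ) ∂νbar) + (∫ x, max (f i x - M) 0 ∂ν i)
        + ((W2sq (ν i) νbar).toReal + δ') / 2 := by
    intro i
    haveI := hπprob i
    -- integrability over the coupling
    have hi1 : Integrable (fun z : X × X => f i z.1) (π i) := by
      have h : Integrable (f i) ((π i).map Prod.fst) := by rw [hπ1 i]; exact hint i
      exact (integrable_map_measure (hf i).aestronglyMeasurable
        measurable_fst.aemeasurable).mp h
    have hi2 : Integrable (fun z : X × X => min (G i z.2) (M:ℝ)) (π i) := by
      have h : Integrable (fun y => min (G i y) (M:ℝ)) ((π i).map Prod.snd) := by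
        rw [hπ2 i]; exact hminGint i
      exact (integrable_map_measure ((hGmeas i).min measurable_const).aestronglyMeasurable
        measurable_snd.aemeasurable).mp h
    have hi3 : Integrable (fun z : X × X => max (f i z.1 - M) 0) (π i) := by
      have := (hi1.sub (integrable_const (M:ℝ))).pos_part
      simpa using this
    -- transfer of integrals along the marginals
    have heq1 : ∫ z, f i z.1 ∂π i = ∫ x, f i x ∂ν i := by
      have := integral_map (μ := π i) measurable_fst.aemeasurable
        (hf i).aestronglyMeasurable
      rw [hπ1 i] at this
      exact this.symm
    have heq2 : ∫ z, min (G i z.2) (M:ℝ) ∂π i = ∫ y, min (G i y) (M:ℝ) ∂νbar := by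
      have := integral_map (μ := π i) measurable_snd.aemeasurable
        (f := fun y => min (G i y) (M:ℝ))
        ((hGmeas i).min measurable_const).aestronglyMeasurable
      rw [hπ2 i] at this
      exact this.symm
    have heq3 : ∫ z, max (f i z.1 - M) 0 ∂π i = ∫ x, max (f i x - M) 0 ∂ν i := by
      have := integral_map (μ := π i) measurable_fst.aemeasurable
        (f := fun x => max (f i x - (M:ℝ)) 0)
        (((hf i).sub measurable_const).max measurable_const).aestronglyMeasurable
      rw [hπ1 i] at this
      exact this.symm
    set ψ : X × X → ℝ :=
      fun z => f i z.1 - min (G i z.2) (M:ℝ) - max (f i z.1 - M) 0 with hψdef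
    have hψmeas : Measurable ψ := by
      apply Measurable.sub
      apply Measurable.sub
      · exact (hf i).comp measurable_fst
      · exact ((hGmeas i).min measurable_const).comp measurable_snd
      · exact (((hf i).comp measurable_fst).sub measurable_const).max measurable_const
    have hψint : Integrable ψ (π i) := (hi1.sub hi2).sub hi3
    have hψle : ∀ z : X × X, 2 * ψ z ≤ dist z.1 z.2 ^ 2 := by
      intro z
      have h1 : f i z.1 - dist z.2 z.1 ^ 2 / 2 ≤ G i z.2 := hleG i z.2 z.1
      have h2 : min (f i z.1 - dist z.2 z.1 ^ 2 / 2) (M:ℝ) ≤ min (G i z.2) (M:ℝ) :=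
        min_le_min h1 le_rfl
      have h3 : f i z.1 ≤ min (f i z.1 - dist z.2 z.1 ^ 2 / 2) (M:ℝ)
          + max (f i z.1 - M) 0 + dist z.2 z.1 ^ 2 / 2 := by
        rcases le_total (f i z.1 - dist z.2 z.1 ^ 2 / 2) (M:ℝ) with h | h
        · rw [min_eq_left h]
          linarith [le_max_right (f i z.1 - (M:ℝ)) (0:ℝ)]
        · rw [min_eq_right h]
          linarith [le_max_left (f i z.1 - (M:ℝ)) (0:ℝ), sq_nonneg (dist z.2 z.1)]
      have h4sq : dist z.2 z.1 ^ 2 = dist z.1 z.2 ^ 2 := by rw [dist_comm]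
      rw [hψdef]
      simp only
      linarith [h2, h3, h4sq]
    have hstep1 : ∫ z, ψ z ∂π i ≤ (∫⁻ z, ENNReal.ofReal (ψ z) ∂π i).toReal := by
      rw [integral_eq_lintegral_pos_part_sub_lintegral_neg_part hψint]
      exact sub_le_self _ ENNReal.toReal_nonneg
    have hstep2 : (2:ℝ≥0∞) * ∫⁻ z, ENNReal.ofReal (ψ z) ∂π i
        ≤ W2sq (ν i) νbar + ENNReal.ofReal δ' := by
      calc (2:ℝ≥0∞) * ∫⁻ z, ENNReal.ofReal (ψ z) ∂π i
          = ∫⁻ z, 2 * ENNReal.ofReal (ψ z) ∂π i :=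
            (lintegral_const_mul 2 hψmeas.ennreal_ofReal).symm
      _
          ≤ ∫⁻ z, edist z.1 z.2 ^ 2 ∂π i := by
            apply lintegral_mono
            intro z
            show (2:ℝ≥0∞) * ENNReal.ofReal (ψ z) ≤ edist z.1 z.2 ^ 2
            calc (2:ℝ≥0∞) * ENNReal.ofReal (ψ z) = ENNReal.ofReal (2 * ψ z) := by
                  rw [ENNReal.ofReal_mul (by norm_num : (0:ℝ) ≤ 2)]
                  norm_num
            _ ≤ ENNReal.ofReal (dist z.1 z.2 ^ 2) := ENNReal.ofReal_le_ofReal (hψle z)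
            _ = edist z.1 z.2 ^ 2 := by rw [edist_dist, ENNReal.ofReal_pow dist_nonneg]
      _ ≤ W2sq (ν i) νbar + ENNReal.ofReal δ' := (hπcost i).le
    have hfin : W2sq (ν i) νbar + ENNReal.ofReal δ' ≠ ⊤ :=
      (ENNReal.add_lt_top.mpr ⟨hW i, ENNReal.ofReal_lt_top⟩).ne
    have hstep3 : (∫⁻ z, ENNReal.ofReal (ψ z) ∂π i).toReal
        ≤ ((W2sq (ν i) νbar).toReal + δ') / 2 := by
      have hle : ∫⁻ z, ENNReal.ofReal (ψ z) ∂π i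
          ≤ (W2sq (ν i) νbar + ENNReal.ofReal δ') / 2 := by
        rw [ENNReal.le_div_iff_mul_le (Or.inl (by norm_num)) (Or.inl (by norm_num))]
        rwa [mul_comm]
      calc (∫⁻ z, ENNReal.ofReal (ψ z) ∂π i).toReal
          ≤ ((W2sq (ν i) νbar + ENNReal.ofReal δ') / 2).toReal :=
            ENNReal.toReal_mono (by simp [ENNReal.div_eq_top, hfin]) hle
      _ = ((W2sq (ν i) νbar).toReal + δ') / 2 := by
          rw [ENNReal.toReal_div, ENNReal.toReal_add (hW i).ne ENNReal.ofReal_ne_top,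
            ENNReal.toReal_ofReal hδ'.le]
          norm_num
    have hsub1 : ∫ z, (f i z.1 - min (G i z.2) (M:ℝ)) ∂π i
        = (∫ z, f i z.1 ∂π i) - ∫ z, min (G i z.2) (M:ℝ) ∂π i := integral_sub hi1 hi2
    have hsub2 : ∫ z, ((f i z.1 - min (G i z.2) (M:ℝ)) - max (f i z.1 - M) 0) ∂π i
        = (∫ z, (f i z.1 - min (G i z.2) (M:ℝ)) ∂π i) - ∫ z, max (f i z.1 - M) 0 ∂π i :=
      integral_sub (hi1.sub hi2) hi3
    have hsplit : ∫ z, ψ z ∂π i = ∫ x, f i x ∂ν i - ∫ y, min (G i y) (M:ℝ) ∂νbar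
        - ∫ x, max (f i x - M) 0 ∂ν i := by
      calc ∫ z, ψ z ∂π i
          = ∫ z, ((f i z.1 - min (G i z.2) (M:ℝ)) - max (f i z.1 - M) 0) ∂π i := rfl
      _ = ∫ x, f i x ∂ν i - ∫ y, min (G i y) (M:ℝ) ∂νbar
          - ∫ x, max (f i x - M) 0 ∂ν i := by rw [hsub2, hsub1, heq1, heq2, heq3]
    have := hstep1.trans hstep3
    rw [hsplit] at this
    linarith
  -- assembly
  have hsumB : ∑ i, ∫ y, min (G i y) (M:ℝ) ∂νbar ≤ 0 := by
    rw [← integral_finset_sum _ (fun i _ => hminGint i)]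
    apply integral_nonpos
    intro y
    calc ∑ i, min (G i y) (M:ℝ) ≤ ∑ i, G i y :=
          Finset.sum_le_sum fun i _ => min_le_left _ _
    _ ≤ 0 := hGsum y
  have hfinal : ∑ i, ∫ x, f i x ∂ν i
      ≤ (∑ i, ∫ y, min (G i y) (M:ℝ) ∂νbar) + (∑ i, ∫ x, max (f i x - M) 0 ∂ν i)
        + ((∑ i, (W2sq (ν i) νbar).toReal) + k * δ') / 2 := by
    calc ∑ i, ∫ x, f i x ∂ν i
        ≤ ∑ i, ((∫ y, min (G i y) (M:ℝ) ∂νbar) + (∫ x, max (f i x - M) 0 ∂ν i)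
            + ((W2sq (ν i) νbar).toReal + δ') / 2) := Finset.sum_le_sum fun i _ => hperi i
    _ = (∑ i, ∫ y, min (G i y) (M:ℝ) ∂νbar) + (∑ i, ∫ x, max (f i x - M) 0 ∂ν i)
        + ((∑ i, (W2sq (ν i) νbar).toReal) + k * δ') / 2 := by
        rw [Finset.sum_add_distrib, Finset.sum_add_distrib]
        congr 1
        rw [← Finset.sum_div]
        congr 1
        rw [Finset.sum_add_distrib, Finset.sum_const, Finset.card_univ, Fintype.card_fin,
          nsmul_eq_mul]
  have hkδ' : (k : ℝ) * δ' ≤ δ := by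
    have hk1 : (0:ℝ) < (k:ℝ) + 1 := by positivity
    calc (k:ℝ) * δ' = δ * ((k:ℝ) / ((k:ℝ) + 1)) := by rw [hδ'def]; ring
    _ ≤ δ * 1 := by
        apply mul_le_mul_of_nonneg_left _ hδ.le
        rw [div_le_one hk1]
        linarith
    _ = δ := mul_one δ
  linarith [hsumB, hM, hfinal, hkδ']

end Duality
set_option maxHeartbeats 1000000 in
/-- Functional Blaschke–Santaló type inequality in a `BCD(1,∞)` metric measure
space. -/
theorem stmt17 {X : Type*} [MetricSpace X] [MeasurableSpace X] [BorelSpace X]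
    (m : Measure X) [IsProbabilityMeasure m]
    (hBCD : ∀ (j : ℕ) (w : Fin j → ℝ) (ν : Fin j → Measure X),
      (∀ i, 0 < w i) → (∑ i, w i = 1) → (∀ i, IsProbabilityMeasure (ν i)) →
      (∀ i, ∃ x₀ : X, ∫⁻ z, edist x₀ z ^ 2 ∂(ν i) < ⊤) →
      ∃ νbar : Measure X, IsProbabilityMeasure νbar ∧
        (∑ i, ENNReal.ofReal (w i) * W2sq (ν i) νbar
          = ⨅ ρ : {ρ : Measure X // IsProbabilityMeasure ρ},
              ∑ i, ENNReal.ofReal (w i) * W2sq (ν i) (ρ : Measure X)) ∧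
        Ent m νbar ≤ ∑ i, ((w i : ℝ) : EReal) * Ent m (ν i)
          - ((1 / 2 * (⨅ ρ : {ρ : Measure X // IsProbabilityMeasure ρ},
              ∑ i, ENNReal.ofReal (w i) * W2sq (ν i) (ρ : Measure X)).toReal : ℝ) : EReal))
    (k : ℕ) (f : Fin k → X → ℝ) (hf : ∀ i, Measurable (f i))
    (hpos : ∀ i, 0 < ∫⁻ x, ENNReal.ofReal (Real.exp (f i x)) ∂m)
    (hfin : ∀ i, ∫⁻ x, ENNReal.ofReal (Real.exp (f i x)) ∂m < ⊤)
    (hmom : ∀ i, ∃ x₀ : X,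
      ∫⁻ z, edist x₀ z ^ 2
        ∂((∫⁻ x, ENNReal.ofReal (Real.exp (f i x)) ∂m)⁻¹ •
            m.withDensity (fun x => ENNReal.ofReal (Real.exp (f i x)))) < ⊤)
    (hdual : ∀ p : Fin k → X, ∀ y : X,
      ∑ i, f i (p i) ≤ 1 / 2 * ∑ i, dist y (p i) ^ 2) :
    ∏ i, ∫⁻ x, ENNReal.ofReal (Real.exp (f i x)) ∂m ≤ 1 := by
  classical
  rcases Nat.eq_zero_or_pos k with hk0 | hk
  · subst hk0
    simp
  set Z : Fin k → ℝ≥0∞ := fun i => ∫⁻ x, ENNReal.ofReal (Real.exp (f i x)) ∂m with hZdef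
  set ν : Fin k → Measure X := fun i =>
    (∫⁻ x, ENNReal.ofReal (Real.exp (f i x)) ∂m)⁻¹ •
      m.withDensity (fun x => ENNReal.ofReal (Real.exp (f i x))) with hνdef
  have hZ0 : ∀ i, Z i ≠ 0 := fun i => (hpos i).ne'
  have hZt : ∀ i, Z i ≠ ⊤ := fun i => (hfin i).ne
  choose x₀ hx₀ using hmom
  have hx₀' : ∀ i, ∫⁻ z, edist (x₀ i) z ^ 2 ∂(ν i) < ⊤ := hx₀
  -- pointwise upper bound from duality
  have hub : ∀ (i : Fin k) (x : X),
      f i x ≤ (f i (x₀ i) - ∑ j, f j (x₀ i)) + dist (x₀ i) x ^ 2 / 2 := by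
    intro i x
    have h := hdual (fun j => if j = i then x else x₀ i) (x₀ i)
    have hL : ∑ j, f j (if j = i then x else x₀ i)
        = (f i x - f i (x₀ i)) + ∑ j, f j (x₀ i) := by
      have hterm : ∀ j : Fin k, f j (if j = i then x else x₀ i)
          = (if j = i then f i x - f i (x₀ i) else 0) + f j (x₀ i) := by
        intro j
        by_cases hj : j = i
        · subst hj; simp
        · simp [hj]
      rw [Finset.sum_congr rfl fun j _ => hterm j, Finset.sum_add_distrib,
        Finset.sum_ite_eq' Finset.univ i (fun _ => f i x - f i (x₀ i))]
      simp
    have hR : ∑ j, dist (x₀ i) (if j = i then x else x₀ i) ^ 2 = dist (x₀ i) x ^ 2 := by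
      have hterm : ∀ j : Fin k, dist (x₀ i) (if j = i then x else x₀ i) ^ 2
          = if j = i then dist (x₀ i) x ^ 2 else 0 := by
        intro j
        by_cases hj : j = i <;> simp [hj]
      rw [Finset.sum_congr rfl fun j _ => hterm j,
        Finset.sum_ite_eq' Finset.univ i (fun _ => dist (x₀ i) x ^ 2)]
      simp
    rw [hL, hR] at h
    linarith
  -- entropy formula for each ν i
  have hEF : ∀ i, IsProbabilityMeasure (ν i) ∧ Integrable (f i) (ν i) ∧
      Ent m (ν i) = ((∫ x, f i x ∂(ν i) - Real.log (Z i).toReal : ℝ) : EReal) :=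
    fun i => ent_formula m (f i) (hf i) (hZ0 i) (hZt i) (x₀ i) _ (hub i) (hx₀' i)
  have hprob : ∀ i, IsProbabilityMeasure (ν i) := fun i => (hEF i).1
  have hint : ∀ i, Integrable (f i) (ν i) := fun i => (hEF i).2.1
  have hEnt : ∀ i, Ent m (ν i)
      = ((∫ x, f i x ∂(ν i) - Real.log (Z i).toReal : ℝ) : EReal) := fun i => (hEF i).2.2
  -- apply the BCD hypothesis
  have hw : ∀ i : Fin k, (0:ℝ) < 1 / k := fun _ => by positivity
  have hwsum : ∑ _i : Fin k, (1:ℝ) / k = 1 := by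
    rw [Finset.sum_const, Finset.card_univ, Fintype.card_fin, nsmul_eq_mul]
    field_simp
  obtain ⟨νbar, hbarprob, hVeq, hEntineq⟩ :=
    hBCD k (fun _ => 1 / k) ν hw hwsum hprob (fun i => ⟨x₀ i, hx₀' i⟩)
  haveI := hbarprob
  haveI := fun i => hprob i
  set i0 : Fin k := ⟨0, hk⟩ with hi0
  -- finiteness of the variance functional
  have hWν0 : ∀ i, W2sq (ν i) (ν i0) < ⊤ :=
    fun i => W2sq_lt_top (ν i) (ν i0) (x₀ i) (x₀ i0) (hx₀' i) (hx₀' i0)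
  have hVfin : (⨅ ρ : {ρ : Measure X // IsProbabilityMeasure ρ},
      ∑ i, ENNReal.ofReal ((1:ℝ) / k) * W2sq (ν i) (ρ : Measure X)) < ⊤ := by
    refine lt_of_le_of_lt (iInf_le _ ⟨ν i0, hprob i0⟩) ?_
    refine ENNReal.sum_lt_top.mpr fun i _ => ?_
    exact ENNReal.mul_lt_top ENNReal.ofReal_lt_top (hWν0 i)
  rw [← hVeq] at hEntineq hVfin
  have hWfin : ∀ i, W2sq (ν i) νbar < ⊤ := by
    intro i
    have hterm := ENNReal.sum_lt_top.mp hVfin i (Finset.mem_univ i)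
    by_contra h'
    rw [not_lt, top_le_iff] at h'
    rw [h', ENNReal.mul_top (ENNReal.ofReal_pos.mpr (hw i)).ne'] at hterm
    exact absurd hterm (lt_irrefl ⊤)
  -- duality bound
  have hdua := @duality X _ _ _ k f hf hdual ν hprob x₀ i0 hx₀' hint νbar hbarprob hWfin
  -- convert the entropy inequality to a real inequality
  have hcoesum : ∀ (g : Fin k → ℝ), ((∑ i, g i : ℝ) : EReal) = ∑ i, ((g i : ℝ) : EReal) :=
    fun g => map_sum (⟨⟨Real.toEReal, EReal.coe_zero⟩, EReal.coe_add⟩ : ℝ →+ EReal) g Finset.univ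
  have hRHS : ∑ i, (((1:ℝ) / k : ℝ) : EReal) * Ent m (ν i)
      = ((∑ i, (1 / (k:ℝ)) * (∫ x, f i x ∂(ν i) - Real.log (Z i).toReal) : ℝ) : EReal) := by
    rw [hcoesum]
    refine Finset.sum_congr rfl fun i _ => ?_
    rw [hEnt i, ← EReal.coe_mul]
  have hVto : (∑ i, ENNReal.ofReal ((1:ℝ) / k) * W2sq (ν i) νbar).toReal
      = ∑ i, (1 / (k:ℝ)) * (W2sq (ν i) νbar).toReal := by
    rw [ENNReal.toReal_sum
      (fun i _ => (ENNReal.mul_lt_top ENNReal.ofReal_lt_top (hWfin i)).ne)]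
    exact Finset.sum_congr rfl fun i _ => by
      rw [ENNReal.toReal_mul, ENNReal.toReal_ofReal (by positivity)]
  rw [hRHS, hVto, ← EReal.coe_sub] at hEntineq
  have h0 : (0:ℝ) ≤ ∑ i, (1 / (k:ℝ)) * (∫ x, f i x ∂(ν i) - Real.log (Z i).toReal)
      - 1 / 2 * ∑ i, (1 / (k:ℝ)) * (W2sq (ν i) νbar).toReal :=
    by
      have hnn : (0:EReal) ≤ Ent m νbar := @ent_nonneg X ‹MeasurableSpace X› m νbar ‹IsProbabilityMeasure m› hbarprob
      exact EReal.coe_nonneg.mp (le_trans hnn hEntineq)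
  -- real algebra
  have hkpos : (0:ℝ) < (k:ℝ) := by exact_mod_cast hk
  have hsum1 : ∑ i, (1 / (k:ℝ)) * (∫ x, f i x ∂(ν i) - Real.log (Z i).toReal)
      = (1 / (k:ℝ)) * (∑ i, ∫ x, f i x ∂(ν i) - ∑ i, Real.log (Z i).toReal) := by
    rw [← Finset.sum_sub_distrib, Finset.mul_sum]
  have hsum2 : ∑ i, (1 / (k:ℝ)) * (W2sq (ν i) νbar).toReal
      = (1 / (k:ℝ)) * ∑ i, (W2sq (ν i) νbar).toReal := by
    rw [Finset.mul_sum]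
  rw [hsum1, hsum2] at h0
  have hlog : ∑ i, Real.log (Z i).toReal ≤ 0 := by
    have h2 : 0 ≤ (k:ℝ) * ((1 / (k:ℝ)) * (∑ i, ∫ x, f i x ∂(ν i)
        - ∑ i, Real.log (Z i).toReal)
        - 1 / 2 * ((1 / (k:ℝ)) * ∑ i, (W2sq (ν i) νbar).toReal)) :=
      mul_nonneg hkpos.le h0
    have hkne : (k:ℝ) ≠ 0 := hkpos.ne'
    have h3 : 0 ≤ (∑ i, ∫ x, f i x ∂(ν i) - ∑ i, Real.log (Z i).toReal)
        - 1 / 2 * ∑ i, (W2sq (ν i) νbar).toReal := by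
      have hexpand : (k:ℝ) * ((1 / (k:ℝ)) * (∑ i, ∫ x, f i x ∂(ν i)
          - ∑ i, Real.log (Z i).toReal)
          - 1 / 2 * ((1 / (k:ℝ)) * ∑ i, (W2sq (ν i) νbar).toReal))
          = (∑ i, ∫ x, f i x ∂(ν i) - ∑ i, Real.log (Z i).toReal)
            - 1 / 2 * ∑ i, (W2sq (ν i) νbar).toReal := by
        field_simp
      rwa [hexpand] at h2
    linarith [hdua]
  -- conclude
  have hZpos : ∀ i, 0 < (Z i).toReal := fun i => ENNReal.toReal_pos (hZ0 i) (hZt i)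
  have hprodfin : ∏ i, Z i ≠ ⊤ := (ENNReal.prod_lt_top fun i _ => (hZt i).lt_top).ne
  have hprodle : (∏ i, Z i).toReal ≤ 1 := by
    rw [ENNReal.toReal_prod]
    have hexp : ∏ i, (Z i).toReal = Real.exp (∑ i, Real.log (Z i).toReal) := by
      rw [Real.exp_sum]
      exact Finset.prod_congr rfl fun i _ => (Real.exp_log (hZpos i)).symm
    rw [hexp]
    calc Real.exp (∑ i, Real.log (Z i).toReal) ≤ Real.exp 0 := Real.exp_le_exp.mpr hlog
    _ = 1 := Real.exp_zero
  show ∏ i, Z i ≤ 1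
  rw [← ENNReal.toReal_le_toReal hprodfin ENNReal.one_ne_top, ENNReal.toReal_one]
  exact hprodle
end

section
/- Let (X,d) be a metric space, K < 0, N > 0, and (y_t) an EVI_{K,N} gradient flow starting at y, i.e. satisfying e^{Kt}s_{K/N}²(d(y_t,z)/2) − s_{K/N}²(d(y,z)/2) ≤ I_K(t)·(N/2)·(1 − U_N(z)/U_N(y_t)) for all z and t > 0, where U_N ≥ 0. Then for all z and t > 0: c_{K/N}(d(y_t,z)) ≤ e^{−Kt}·c_{K/N}(d(y,z)) + √(−N/K)·(1 − e^{−Kt} − K·e^{−Kt}·I_K(t)), where c_{K/N}(θ) = cosh(√(−K/N)θ), s_{K/N}(θ) = sinh(√(−K/N)θ)/√(−K/N), and I_K(t) = (e^{Kt}−1)/K. -/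
/-- Distance estimate along an `EVI_{K,N}` gradient flow with `K < 0`:
from the integral `EVI_{K,N}` inequality one deduces
`c_{K/N}(d(y_t,z)) ≤ e^{−Kt} c_{K/N}(d(y,z)) + √(−N/K)(1 − e^{−Kt} − K e^{−Kt} I_K(t))`. -/
theorem stmt19 {X : Type*} [MetricSpace X] (K N : ℝ) (hK : K < 0) (hN : 0 < N)
    (y : ℝ → X) (y₀ : X) (U : X → ℝ) (hU : ∀ x, 0 ≤ U x)
    (hEVI : ∀ z : X, ∀ t : ℝ, 0 < t →
      Real.exp (K * t) *
          (Real.sinh (Real.sqrt (-(K / N)) * (dist (y t) z / 2)) / Real.sqrt (-(K / N))) ^ 2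
        - (Real.sinh (Real.sqrt (-(K / N)) * (dist y₀ z / 2)) / Real.sqrt (-(K / N))) ^ 2
      ≤ ((Real.exp (K * t) - 1) / K) * (N / 2) * (1 - U z / U (y t))) :
    ∀ z : X, ∀ t : ℝ, 0 < t →
      Real.cosh (Real.sqrt (-(K / N)) * dist (y t) z)
        ≤ Real.exp (-(K * t)) * Real.cosh (Real.sqrt (-(K / N)) * dist y₀ z)
          + Real.sqrt (-(N / K)) *
              (1 - Real.exp (-(K * t)) - K * Real.exp (-(K * t)) * ((Real.exp (K * t) - 1) / K)) := by
  intro z t ht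
  have hKN : (0:ℝ) < -(K / N) := by
    have : K / N < 0 := div_neg_of_neg_of_pos hK hN
    linarith
  set a := Real.sqrt (-(K / N)) with ha
  have hapos : 0 < a := Real.sqrt_pos.mpr hKN
  have ha2 : a ^ 2 = -(K / N) := Real.sq_sqrt hKN.le
  have hEVIzt := hEVI z t ht
  have hKne : K ≠ 0 := ne_of_lt hK
  have hNne : N ≠ 0 := ne_of_gt hN
  have hcne : -(K / N) ≠ 0 := ne_of_gt hKN
  have hexp : Real.exp (-(K * t)) * Real.exp (K * t) = 1 := by
    rw [← Real.exp_add]; simp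
  have hzero : 1 - Real.exp (-(K * t)) - K * Real.exp (-(K * t)) * ((Real.exp (K * t) - 1) / K) = 0 := by
    field_simp
    nlinarith [hexp]
  rw [hzero, mul_zero, add_zero]
  -- half-angle identities
  have h1 : Real.cosh (a * dist (y t) z) = 2 * Real.sinh (a * (dist (y t) z / 2)) ^ 2 + 1 := by
    rw [show a * dist (y t) z = 2 * (a * (dist (y t) z / 2)) by ring, Real.cosh_two_mul,
      Real.cosh_sq]; ring
  have h0 : Real.cosh (a * dist y₀ z) = 2 * Real.sinh (a * (dist y₀ z / 2)) ^ 2 + 1 := by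
    rw [show a * dist y₀ z = 2 * (a * (dist y₀ z / 2)) by ring, Real.cosh_two_mul,
      Real.cosh_sq]; ring
  set st := Real.sinh (a * (dist (y t) z / 2))
  set s0 := Real.sinh (a * (dist y₀ z / 2))
  set E := Real.exp (K * t) with hE
  -- bound on RHS of EVI
  have hu : 0 ≤ U z / U (y t) := div_nonneg (hU z) (hU _)
  have hE1 : E < 1 := by
    rw [hE, Real.exp_lt_one_iff]
    exact mul_neg_of_neg_of_pos hK ht
  have hI : 0 ≤ (E - 1) / K := by
    rw [div_nonneg_iff]; right; constructor <;> linarith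
  have hP : 0 ≤ (E - 1) / K * (N / 2) := mul_nonneg hI (by linarith)
  have hRHS : (E - 1) / K * (N / 2) * (1 - U z / U (y t)) ≤ (E - 1) / K * (N / 2) := by
    nlinarith [mul_nonneg hP hu]
  have hEVI2 : E * (st / a) ^ 2 - (s0 / a) ^ 2 ≤ (E - 1) / K * (N / 2) :=
    le_trans hEVIzt hRHS
  rw [div_pow, div_pow, ha2] at hEVI2
  have h2 := mul_le_mul_of_nonneg_right hEVI2 hKN.le
  have eL : (E * (st ^ 2 / -(K / N)) - s0 ^ 2 / -(K / N)) * -(K / N) = E * st ^ 2 - s0 ^ 2 := by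
    rw [sub_mul, mul_assoc, div_mul_cancel₀ _ hcne, div_mul_cancel₀ _ hcne]
  have eR : (E - 1) / K * (N / 2) * -(K / N) = -(E - 1) / 2 := by
    field_simp
  rw [eL, eR] at h2
  have key : E * (2 * st ^ 2 + 1) ≤ 2 * s0 ^ 2 + 1 := by nlinarith [h2]
  rw [h1, h0]
  have hge1 : 1 ≤ Real.exp (-(K * t)) := by
    rw [Real.one_le_exp_iff]
    nlinarith
  have hinv := mul_le_mul_of_nonneg_left key (Real.exp_pos (-(K * t))).le
  have hX : Real.exp (-(K * t)) * (E * (2 * st ^ 2 + 1)) = 2 * st ^ 2 + 1 := by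
    rw [← mul_assoc, hexp, one_mul]
  rw [hX] at hinv
  exact hinv
end
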